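/- arXiv:2209.12760 — 8 statements merged into one kernel-verified Lean document; each statement's English description precedes it below -/
import Mathlib

section
/- Let {F_N} be a sequence of bounded operators from H₁ ⊗ H₂ to K₁ ⊗ K₂ that is uniformly bounded in operator norm and converges in the strong operator topology to a bounded operator F. If each F_N has Schmidt rank at most r (i.e., F_N is a sum of at most r elementary tensor product operators), then F has Schmidt rank at most r. -/
/-- A structure witnessing that `T` is the Hilbert space tensor product of `H` and `K`:
a bilinear map `tmul` whose inner products multiply and whose range spans a dense subspace. -/
structure HilbertTensorProduct (H K T : Type*)
    [NormedAddCommGroup H] [InnerProductSpace ℂ H]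
    [NormedAddCommGroup K] [InnerProductSpace ℂ K]
    [NormedAddCommGroup T] [InnerProductSpace ℂ T] [CompleteSpace T] where
  tmul : H →ₗ[ℂ] K →ₗ[ℂ] T
  inner_tmul : ∀ (x x' : H) (y y' : K),
    (inner ℂ (tmul x y) (tmul x' y') : ℂ) = (inner ℂ x x' : ℂ) * (inner ℂ y y' : ℂ)
  dense_span : Dense
    ((Submodule.span ℂ (Set.range fun p : H × K => tmul p.1 p.2) : Submodule ℂ T) : Set T)

/-- `f` is a Bessel sequence in `H`. -/
def IsBessel {H : Type*} [NormedAddCommGroup H] [InnerProductSpace ℂ H] {ι : Type*}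
    (f : ι → H) : Prop :=
  ∃ B : ℝ, 0 < B ∧ ∀ x : H,
    Summable (fun i => ‖(inner ℂ (f i) x : ℂ)‖ ^ 2) ∧
    ∑' i, ‖(inner ℂ (f i) x : ℂ)‖ ^ 2 ≤ B * ‖x‖ ^ 2

/-- `f` is a frame for `H`. -/
def IsFrame {H : Type*} [NormedAddCommGroup H] [InnerProductSpace ℂ H] {ι : Type*}
    (f : ι → H) : Prop :=
  ∃ A B : ℝ, 0 < A ∧ 0 < B ∧ ∀ x : H,
    Summable (fun i => ‖(inner ℂ (f i) x : ℂ)‖ ^ 2) ∧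
    A * ‖x‖ ^ 2 ≤ ∑' i, ‖(inner ℂ (f i) x : ℂ)‖ ^ 2 ∧
    ∑' i, ‖(inner ℂ (f i) x : ℂ)‖ ^ 2 ≤ B * ‖x‖ ^ 2
namespace SchmidtAux

variable {H₁ H₂ K₁ K₂ T S : Type*}
  [NormedAddCommGroup H₁] [InnerProductSpace ℂ H₁] [CompleteSpace H₁]
  [NormedAddCommGroup H₂] [InnerProductSpace ℂ H₂] [CompleteSpace H₂]
  [NormedAddCommGroup K₁] [InnerProductSpace ℂ K₁] [CompleteSpace K₁]
  [NormedAddCommGroup K₂] [InnerProductSpace ℂ K₂] [CompleteSpace K₂]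
  [NormedAddCommGroup T] [InnerProductSpace ℂ T] [CompleteSpace T]
  [NormedAddCommGroup S] [InnerProductSpace ℂ S] [CompleteSpace S]

lemma norm_tmul (P : HilbertTensorProduct H₁ H₂ T) (x : H₁) (y : H₂) :
    ‖P.tmul x y‖ = ‖x‖ * ‖y‖ := by
  have h := P.inner_tmul x x y y
  rw [inner_self_eq_norm_sq_to_K, inner_self_eq_norm_sq_to_K, inner_self_eq_norm_sq_to_K] at h
  have h' : (‖P.tmul x y‖ : ℝ)^2 = (‖x‖ * ‖y‖)^2 := by
    rw [mul_pow]; exact_mod_cast h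
  nlinarith [norm_nonneg (P.tmul x y), norm_nonneg x, norm_nonneg y,
    mul_nonneg (norm_nonneg x) (norm_nonneg y)]

/-- `x ↦ P.tmul x y` as a continuous linear map. -/
noncomputable def lop (P : HilbertTensorProduct H₁ H₂ T) (y : H₂) : H₁ →L[ℂ] T :=
  LinearMap.mkContinuous (P.tmul.flip y) ‖y‖ (fun x => by
    rw [LinearMap.flip_apply, norm_tmul]; exact le_of_eq (mul_comm _ _))

@[simp] lemma lop_apply (P : HilbertTensorProduct H₁ H₂ T) (y : H₂) (x : H₁) :
    lop P y x = P.tmul x y := rfl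

lemma lop_add (P : HilbertTensorProduct H₁ H₂ T) (y y' : H₂) :
    lop P (y + y') = lop P y + lop P y' := by
  ext x; simp

lemma lop_smul (P : HilbertTensorProduct H₁ H₂ T) (a : ℂ) (y : H₂) :
    lop P (a • y) = a • lop P y := by
  ext x; simp

lemma norm_lop_le (P : HilbertTensorProduct H₁ H₂ T) (y : H₂) : ‖lop P y‖ ≤ ‖y‖ :=
  LinearMap.mkContinuous_norm_le _ (norm_nonneg y) _

/-- The slice operator: `⟨ξ, slice F η y x⟩ = ⟨ξ⊗η, F(x⊗y)⟩`. -/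
noncomputable def slice (P : HilbertTensorProduct H₁ H₂ T) (Q : HilbertTensorProduct K₁ K₂ S)
    (F : T →L[ℂ] S) (η : K₂) (y : H₂) : H₁ →L[ℂ] K₁ :=
  (ContinuousLinearMap.adjoint (lop Q η)) ∘L F ∘L (lop P y)

lemma slice_apply (P : HilbertTensorProduct H₁ H₂ T) (Q : HilbertTensorProduct K₁ K₂ S)
    (F : T →L[ℂ] S) (η : K₂) (y : H₂) (x : H₁) :
    slice P Q F η y x = (ContinuousLinearMap.adjoint (lop Q η)) (F (P.tmul x y)) := rfl

lemma inner_slice (P : HilbertTensorProduct H₁ H₂ T) (Q : HilbertTensorProduct K₁ K₂ S)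
    (F : T →L[ℂ] S) (η : K₂) (y : H₂) (ξ : K₁) (x : H₁) :
    (inner ℂ ξ (slice P Q F η y x) : ℂ) = inner ℂ (Q.tmul ξ η) (F (P.tmul x y)) := by
  rw [slice_apply, ContinuousLinearMap.adjoint_inner_right, lop_apply]

lemma norm_slice_le (P : HilbertTensorProduct H₁ H₂ T) (Q : HilbertTensorProduct K₁ K₂ S)
    (F : T →L[ℂ] S) (η : K₂) (y : H₂) :
    ‖slice P Q F η y‖ ≤ ‖F‖ * ‖η‖ * ‖y‖ := by
  refine (ContinuousLinearMap.opNorm_comp_le _ _).trans ?_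
  have h1 : ‖ContinuousLinearMap.adjoint (lop Q η)‖ ≤ ‖η‖ := by
    rw [LinearIsometryEquiv.norm_map]; exact norm_lop_le Q η
  refine le_trans (mul_le_mul h1 (ContinuousLinearMap.opNorm_comp_le _ _) (norm_nonneg _) (norm_nonneg _)) ?_
  have h2 := norm_lop_le P y
  have := mul_le_mul_of_nonneg_left h2 (norm_nonneg F)
  nlinarith [norm_nonneg F, norm_nonneg (lop P y), norm_nonneg η, norm_nonneg y]

lemma slice_eq_sum (P : HilbertTensorProduct H₁ H₂ T) (Q : HilbertTensorProduct K₁ K₂ S)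
    {r : ℕ} (G : T →L[ℂ] S) (F₁ : Fin r → H₁ →L[ℂ] K₁) (F₂ : Fin r → H₂ →L[ℂ] K₂)
    (h : ∀ (x : H₁) (y : H₂), G (P.tmul x y) = ∑ k, Q.tmul (F₁ k x) (F₂ k y))
    (η : K₂) (y : H₂) :
    slice P Q G η y = ∑ k, (inner ℂ η (F₂ k y) : ℂ) • F₁ k := by
  ext x
  apply ext_inner_left ℂ
  intro ξ
  rw [inner_slice, h]
  rw [inner_sum]
  simp only [ContinuousLinearMap.sum_apply, inner_sum, ContinuousLinearMap.smul_apply,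
    inner_smul_right, Q.inner_tmul]
  exact Finset.sum_congr rfl fun k _ => mul_comm _ _


open Submodule in
lemma aux_not_li {V : Type*} [AddCommGroup V] [Module ℂ V] {r : ℕ}
    (w : Fin r → V) (v : Fin (r+1) → V)
    (hv : ∀ i, v i ∈ Submodule.span ℂ (Set.range w)) :
    ∃ c : Fin (r+1) → ℂ, ∑ i, c i • v i = 0 ∧ ∃ i, c i ≠ 0 := by
  rw [← Fintype.not_linearIndependent_iff]
  intro li
  set W := Submodule.span ℂ (Set.range w)
  haveI : FiniteDimensional ℂ W := FiniteDimensional.span_of_finite ℂ (Set.finite_range w)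
  have li' : LinearIndependent ℂ (fun i => (⟨v i, hv i⟩ : W)) :=
    LinearIndependent.of_comp W.subtype (by exact li)
  have h1 := li'.fintype_card_le_finrank
  have h2 : Module.finrank ℂ W ≤ r := by
    have := finrank_range_le_card (R := ℂ) w; simpa [Set.finrank] using this
  simp [Fintype.card_fin] at h1
  omega

set_option linter.unusedSectionVars false

lemma slices_dependent
    (P : HilbertTensorProduct H₁ H₂ T) (Q : HilbertTensorProduct K₁ K₂ S)
    {r : ℕ} (FN : ℕ → T →L[ℂ] S) (F : T →L[ℂ] S)
    (hconv : ∀ x : T, Filter.Tendsto (fun N => FN N x) Filter.atTop (nhds (F x)))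
    (hrank : ∀ N, ∃ (F₁ : Fin r → H₁ →L[ℂ] K₁) (F₂ : Fin r → H₂ →L[ℂ] K₂),
      ∀ (x : H₁) (y : H₂), FN N (P.tmul x y) = ∑ k, Q.tmul (F₁ k x) (F₂ k y))
    (e : Fin (r+1) → K₂ × H₂) :
    ∃ c : Fin (r+1) → ℂ, (∃ i, c i ≠ 0) ∧
      ∑ i, c i • slice P Q F (e i).1 (e i).2 = 0 := by
  have hdep : ∀ N, ∃ c : Fin (r+1) → ℂ,
      ∑ i, c i • slice P Q (FN N) (e i).1 (e i).2 = 0 ∧ ∃ i, c i ≠ 0 := by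
    intro N
    obtain ⟨F₁, F₂, hF⟩ := hrank N
    apply aux_not_li F₁
    intro i
    rw [slice_eq_sum P Q (FN N) F₁ F₂ hF]
    exact Submodule.sum_mem _ fun k _ =>
      Submodule.smul_mem _ _ (Submodule.subset_span ⟨k, rfl⟩)
  choose c hc0 hcne using hdep
  have hcne0 : ∀ N, c N ≠ 0 := by
    intro N h
    obtain ⟨i, hi⟩ := hcne N
    exact hi (by rw [h]; rfl)
  set u : ℕ → (Fin (r+1) → ℂ) := fun N => (‖c N‖)⁻¹ • c N with hu
  have hmem : ∀ N, u N ∈ Metric.sphere (0 : Fin (r+1) → ℂ) 1 := by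
    intro N
    simp only [Metric.mem_sphere, dist_zero_right, hu, norm_smul, norm_inv, norm_norm]
    exact inv_mul_cancel₀ (norm_ne_zero_iff.mpr (hcne0 N))
  obtain ⟨cinf, hcinf, φ, hφ, hlim⟩ :=
    (isCompact_sphere (0 : Fin (r+1) → ℂ) 1).tendsto_subseq hmem
  refine ⟨cinf, ?_, ?_⟩
  · by_contra h
    push_neg at h
    have hz : cinf = 0 := funext h
    rw [Metric.mem_sphere, hz] at hcinf
    simp at hcinf
  · ext x
    have hsum0 : ∀ N, ∑ i, u N i • slice P Q (FN N) (e i).1 (e i).2 x = 0 := by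
      intro N
      have h0 := congrArg (fun G : H₁ →L[ℂ] K₁ => G x) (hc0 N)
      simp only [ContinuousLinearMap.sum_apply, ContinuousLinearMap.smul_apply,
        ContinuousLinearMap.zero_apply] at h0
      simp only [hu, Pi.smul_apply, smul_assoc]
      rw [← Finset.smul_sum, h0, smul_zero]
    have hlim2 : Filter.Tendsto
        (fun m => ∑ i, u (φ m) i • slice P Q (FN (φ m)) (e i).1 (e i).2 x)
        Filter.atTop (nhds (∑ i, cinf i • slice P Q F (e i).1 (e i).2 x)) := by
      apply tendsto_finset_sum
      intro i _
      apply Filter.Tendsto.smul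
      · exact ((continuous_apply i).tendsto cinf).comp hlim
      · have h1 : Filter.Tendsto (fun m => FN (φ m) (P.tmul x (e i).2))
            Filter.atTop (nhds (F (P.tmul x (e i).2))) :=
          (hconv _).comp hφ.tendsto_atTop
        have h2 := ((ContinuousLinearMap.adjoint (lop Q (e i).1)).continuous.tendsto _).comp h1
        exact h2
    have : (fun m => ∑ i, u (φ m) i • slice P Q (FN (φ m)) (e i).1 (e i).2 x)
        = fun _ => (0 : K₁) := funext fun m => hsum0 (φ m)
    rw [this] at hlim2
    have := tendsto_nhds_unique tendsto_const_nhds hlim2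
    simpa using this.symm


lemma slice_add_right (P : HilbertTensorProduct H₁ H₂ T) (Q : HilbertTensorProduct K₁ K₂ S)
    (F : T →L[ℂ] S) (η : K₂) (y y' : H₂) :
    slice P Q F η (y + y') = slice P Q F η y + slice P Q F η y' := by
  ext x; apply ext_inner_left ℂ; intro ξ
  simp only [ContinuousLinearMap.add_apply, inner_add_right, inner_slice]
  rw [map_add (P.tmul x), map_add, inner_add_right]

lemma slice_smul_right (P : HilbertTensorProduct H₁ H₂ T) (Q : HilbertTensorProduct K₁ K₂ S)
    (F : T →L[ℂ] S) (η : K₂) (a : ℂ) (y : H₂) :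
    slice P Q F η (a • y) = a • slice P Q F η y := by
  ext x; apply ext_inner_left ℂ; intro ξ
  simp only [ContinuousLinearMap.smul_apply, inner_smul_right, inner_slice]
  rw [map_smul (P.tmul x), map_smul, inner_smul_right]

lemma slice_add_left (P : HilbertTensorProduct H₁ H₂ T) (Q : HilbertTensorProduct K₁ K₂ S)
    (F : T →L[ℂ] S) (η η' : K₂) (y : H₂) :
    slice P Q F (η + η') y = slice P Q F η y + slice P Q F η' y := by
  ext x; apply ext_inner_left ℂ; intro ξ
  simp only [ContinuousLinearMap.add_apply, inner_add_right, inner_slice]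
  rw [map_add (Q.tmul ξ), inner_add_left]

lemma slice_smul_left (P : HilbertTensorProduct H₁ H₂ T) (Q : HilbertTensorProduct K₁ K₂ S)
    (F : T →L[ℂ] S) (a : ℂ) (η : K₂) (y : H₂) :
    slice P Q F (a • η) y = (starRingEnd ℂ a) • slice P Q F η y := by
  ext x; apply ext_inner_left ℂ; intro ξ
  simp only [ContinuousLinearMap.smul_apply, inner_smul_right, inner_slice]
  rw [map_smul (Q.tmul ξ), inner_smul_left]

lemma ext_of_inner_tmul (Q : HilbertTensorProduct K₁ K₂ S) (u v : S)
    (h : ∀ (ξ : K₁) (η : K₂), (inner ℂ (Q.tmul ξ η) u : ℂ) = inner ℂ (Q.tmul ξ η) v) : u = v := by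
  have hz : ∀ w ∈ (Submodule.span ℂ
      (Set.range fun p : K₁ × K₂ => Q.tmul p.1 p.2) : Submodule ℂ S),
      (inner ℂ w (u - v) : ℂ) = 0 := by
    intro w hw
    induction hw using Submodule.span_induction with
    | mem w hw =>
      obtain ⟨p, rfl⟩ := hw
      rw [inner_sub_right, h p.1 p.2, sub_self]
    | zero => simp
    | add w₁ w₂ _ _ h₁ h₂ => rw [inner_add_left, h₁, h₂, add_zero]
    | smul a w _ hw => rw [inner_smul_left, hw, mul_zero]
  have hcl : IsClosed {w : S | (inner ℂ w (u - v) : ℂ) = 0} :=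
    isClosed_eq (Continuous.inner continuous_id continuous_const) continuous_const
  have hsub : ((Submodule.span ℂ
      (Set.range fun p : K₁ × K₂ => Q.tmul p.1 p.2) : Submodule ℂ S) : Set S)
      ⊆ {w : S | (inner ℂ w (u - v) : ℂ) = 0} := hz
  have hall : ∀ w : S, (inner ℂ w (u - v) : ℂ) = 0 := by
    intro w
    have hd : Dense {w : S | (inner ℂ w (u - v) : ℂ) = 0} := Q.dense_span.mono hsub
    have : closure {w : S | (inner ℂ w (u - v) : ℂ) = 0} = Set.univ := hd.closure_eq
    have hw : w ∈ closure {w : S | (inner ℂ w (u - v) : ℂ) = 0} := by rw [this]; trivial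
    exact hcl.closure_subset hw
  have := hall (u - v)
  rw [inner_self_eq_zero] at this
  exact sub_eq_zero.mp this

end SchmidtAux

open SchmidtAux in
set_option maxHeartbeats 1600000 in
/-- If a uniformly bounded sequence of operators of Schmidt rank at most r converges in the
strong operator topology to F, then F has Schmidt rank at most r. -/
theorem schmidtRank_le_of_sot_limit
    {H₁ H₂ K₁ K₂ T S : Type*}
    [NormedAddCommGroup H₁] [InnerProductSpace ℂ H₁] [CompleteSpace H₁] [TopologicalSpace.SeparableSpace H₁]
    [NormedAddCommGroup H₂] [InnerProductSpace ℂ H₂] [CompleteSpace H₂] [TopologicalSpace.SeparableSpace H₂]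
    [NormedAddCommGroup K₁] [InnerProductSpace ℂ K₁] [CompleteSpace K₁] [TopologicalSpace.SeparableSpace K₁]
    [NormedAddCommGroup K₂] [InnerProductSpace ℂ K₂] [CompleteSpace K₂] [TopologicalSpace.SeparableSpace K₂]
    [NormedAddCommGroup T] [InnerProductSpace ℂ T] [CompleteSpace T] [TopologicalSpace.SeparableSpace T]
    [NormedAddCommGroup S] [InnerProductSpace ℂ S] [CompleteSpace S] [TopologicalSpace.SeparableSpace S]
    (P : HilbertTensorProduct H₁ H₂ T) (Q : HilbertTensorProduct K₁ K₂ S)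
    (r : ℕ) (FN : ℕ → T →L[ℂ] S) (F : T →L[ℂ] S) (C : ℝ)
    (hbdd : ∀ N, ‖FN N‖ ≤ C)
    (hconv : ∀ x : T, Filter.Tendsto (fun N => FN N x) Filter.atTop (nhds (F x)))
    (hrank : ∀ N, ∃ (F₁ : Fin r → H₁ →L[ℂ] K₁) (F₂ : Fin r → H₂ →L[ℂ] K₂),
      ∀ (x : H₁) (y : H₂), FN N (P.tmul x y) = ∑ k, Q.tmul (F₁ k x) (F₂ k y)) :
    ∃ (F₁ : Fin r → H₁ →L[ℂ] K₁) (F₂ : Fin r → H₂ →L[ℂ] K₂),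
      ∀ (x : H₁) (y : H₂), F (P.tmul x y) = ∑ k, Q.tmul (F₁ k x) (F₂ k y) := by
  classical
  set A : Set (H₁ →L[ℂ] K₁) := Set.range (fun p : K₂ × H₂ => slice P Q F p.1 p.2) with hA
  obtain ⟨s, hsA, hspan, hli⟩ := exists_linearIndependent ℂ A
  -- no r+1 independent slices
  have hnotind : ∀ (v : Fin (r+1) → (H₁ →L[ℂ] K₁)), (∀ i, v i ∈ A) →
      ¬ LinearIndependent ℂ v := by
    intro v hv hind
    have hv' : ∀ i, ∃ p : K₂ × H₂, slice P Q F p.1 p.2 = v i := hv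
    choose e he using hv'
    obtain ⟨c, ⟨i0, hi0⟩, hcsum⟩ := slices_dependent P Q FN F hconv hrank e
    have hsum0 : ∑ i, c i • v i = 0 := by
      rw [← hcsum]
      exact Finset.sum_congr rfl fun i _ => by rw [he i]
    exact hi0 (Fintype.linearIndependent_iff.mp hind c hsum0 i0)
  -- s is finite with at most r elements
  have hsfin : s.Finite ∧ s.ncard ≤ r := by
    by_contra hbig
    have ht : ∃ t, t ⊆ s ∧ t.Finite ∧ t.ncard = r + 1 := by
      rcases Set.finite_or_infinite s with hf | hinf
      · have hle : r + 1 ≤ s.ncard := by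
          by_contra hlt
          exact hbig ⟨hf, by omega⟩
        obtain ⟨t, hts, htc⟩ := Set.exists_subset_card_eq hle
        exact ⟨t, hts, hf.subset hts, htc⟩
      · obtain ⟨t, hts, htf, htc⟩ := hinf.exists_subset_ncard_eq (r + 1)
        exact ⟨t, hts, htf, htc⟩
    obtain ⟨t, hts, htf, htc⟩ := ht
    haveI := htf.fintype
    have hcard : Fintype.card t = r + 1 := by
      rw [← Nat.card_coe_set_eq, Nat.card_eq_fintype_card] at htc
      exact htc
    set ev := (Fintype.equivFinOfCardEq hcard).symm with hev
    have hliT : LinearIndependent ℂ (fun z : t => (z : H₁ →L[ℂ] K₁)) := LinearIndepOn.mono (show LinearIndepOn ℂ id s from hli) hts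
    have hlifam : LinearIndependent ℂ (fun i : Fin (r+1) => ((ev i : t) : H₁ →L[ℂ] K₁)) :=
      hliT.comp ev ev.injective
    exact hnotind _ (fun i => hsA (hts (ev i).2)) hlifam
  obtain ⟨hsf, hsr⟩ := hsfin
  haveI := hsf.fintype
  set d := s.ncard with hd
  have hcards : Fintype.card s = d := by
    rw [hd, ← Nat.card_coe_set_eq, Nat.card_eq_fintype_card]
  set es := (Fintype.equivFinOfCardEq hcards).symm with hes
  set g : Fin d → (H₁ →L[ℂ] K₁) := fun k => ((es k : s) : H₁ →L[ℂ] K₁) with hg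
  have hrange : Set.range g = s := by
    ext w
    constructor
    · rintro ⟨k, rfl⟩
      exact (es k).2
    · intro hw
      exact ⟨es.symm ⟨w, hw⟩, by simp [hg]⟩
  have hlig : LinearIndependent ℂ g := hli.comp es es.injective
  set W := Submodule.span ℂ (Set.range g) with hWdef
  have hmem : ∀ (η : K₂) (y : H₂), slice P Q F η y ∈ W := by
    intro η y
    rw [hWdef, hrange, hspan]
    exact Submodule.subset_span ⟨(η, y), rfl⟩
  haveI : FiniteDimensional ℂ W := FiniteDimensional.span_of_finite ℂ (Set.finite_range g)
  set b : Module.Basis (Fin d) ℂ W := Module.Basis.span hlig with hb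
  set c : K₂ → H₂ → Fin d → ℂ :=
    fun η y k => b.repr ⟨slice P Q F η y, hmem η y⟩ k with hcdef
  have hcrepr : ∀ η y, ∑ k, c η y k • g k = slice P Q F η y := by
    intro η y
    have h1 := b.sum_repr ⟨slice P Q F η y, hmem η y⟩
    have h2 := congrArg W.subtype h1
    rw [map_sum] at h2
    simp only [map_smul, Submodule.coe_subtype] at h2
    have h3 : ∀ k : Fin d, ((b k : W) : H₁ →L[ℂ] K₁) = g k := fun k => congrArg Subtype.val (Module.Basis.span_apply hlig k)
    simp only [h3] at h2
    exact h2
  have huniq : ∀ a a' : Fin d → ℂ, ∑ k, a k • g k = ∑ k, a' k • g k → a = a' := by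
    intro a a' h
    have h0 : ∑ k, (a k - a' k) • g k = 0 := by
      simp only [sub_smul, Finset.sum_sub_distrib, h, sub_self]
    have := Fintype.linearIndependent_iff.mp hlig _ h0
    funext k
    exact sub_eq_zero.mp (this k)
  have hc_addy : ∀ η y y', c η (y + y') = c η y + c η y' := by
    intro η y y'
    apply huniq
    rw [hcrepr, slice_add_right, ← hcrepr η y, ← hcrepr η y', ← Finset.sum_add_distrib]
    exact Finset.sum_congr rfl fun k _ => (add_smul _ _ _).symm
  have hc_smuly : ∀ (a : ℂ) η y, c η (a • y) = a • c η y := by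
    intro a η y
    apply huniq
    rw [hcrepr, slice_smul_right, ← hcrepr η y, Finset.smul_sum]
    exact Finset.sum_congr rfl fun k _ => by simp [smul_smul]
  have hc_addη : ∀ η η' y, c (η + η') y = c η y + c η' y := by
    intro η η' y
    apply huniq
    rw [hcrepr, slice_add_left, ← hcrepr η y, ← hcrepr η' y, ← Finset.sum_add_distrib]
    exact Finset.sum_congr rfl fun k _ => (add_smul _ _ _).symm
  have hc_smulη : ∀ (a : ℂ) η y, c (a • η) y = (starRingEnd ℂ a) • c η y := by
    intro a η y
    apply huniq
    rw [hcrepr, slice_smul_left, ← hcrepr η y, Finset.smul_sum]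
    exact Finset.sum_congr rfl fun k _ => by simp [smul_smul]
  set ℓ : Fin d → (@ContinuousLinearMap ℂ ℂ _ _ (RingHom.id ℂ) W _ _ ℂ _ _ NormedSpace.toModule _) :=
    fun k => LinearMap.toContinuousLinearMap (b.coord k) with hℓ
  have hcb : ∀ η y k, ‖c η y k‖ ≤ ‖ℓ k‖ * (‖F‖ * ‖η‖ * ‖y‖) := by
    intro η y k
    have h1 : c η y k = ℓ k ⟨slice P Q F η y, hmem η y⟩ := by
      simp [hcdef, hℓ, Module.Basis.coord_apply]
    rw [h1]
    have h2 := (ℓ k).le_opNorm ⟨slice P Q F η y, hmem η y⟩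
    have h3 : ‖(⟨slice P Q F η y, hmem η y⟩ : W)‖ = ‖slice P Q F η y‖ := rfl
    replace h2 : ‖ℓ k ⟨slice P Q F η y, hmem η y⟩‖ ≤ ‖ℓ k‖ * ‖slice P Q F η y‖ := h2
    refine h2.trans ?_
    exact mul_le_mul_of_nonneg_left (norm_slice_le P Q F η y) (ContinuousLinearMap.opNorm_nonneg _)
  have hψbound : ∀ (k : Fin d) (y : H₂) (η : K₂),
      ‖(starRingEnd ℂ) (c η y k)‖ ≤ (‖ℓ k‖ * (‖F‖ * ‖y‖)) * ‖η‖ := by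
    intro k y η
    rw [RCLike.norm_conj]
    refine (hcb η y k).trans_eq ?_
    ring
  set ψ : Fin d → H₂ → (K₂ →L[ℂ] ℂ) := fun k y => LinearMap.mkContinuous
    { toFun := fun η => (starRingEnd ℂ) (c η y k)
      map_add' := fun η η' => by
        show (starRingEnd ℂ) (c (η + η') y k)
          = (starRingEnd ℂ) (c η y k) + (starRingEnd ℂ) (c η' y k)
        rw [congrFun (hc_addη η η' y) k]
        simp
      map_smul' := fun a η => by
        show (starRingEnd ℂ) (c (a • η) y k) = (RingHom.id ℂ) a • (starRingEnd ℂ) (c η y k)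
        rw [congrFun (hc_smulη a η y) k]
        simp [mul_comm] }
    (‖ℓ k‖ * (‖F‖ * ‖y‖)) (hψbound k y) with hψ
  set F₂v : Fin d → H₂ → K₂ :=
    fun k y => (InnerProductSpace.toDual ℂ K₂).symm (ψ k y) with hF₂v
  have hF₂inner : ∀ k y η, (inner ℂ η (F₂v k y) : ℂ) = c η y k := by
    intro k y η
    have h0 : (inner ℂ (F₂v k y) η : ℂ) = (starRingEnd ℂ) (c η y k) := by
      rw [hF₂v]
      rw [InnerProductSpace.toDual_symm_apply]
      rfl
    rw [← inner_conj_symm, h0]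
    simp
  have hF₂norm : ∀ k y, ‖F₂v k y‖ ≤ (‖ℓ k‖ * ‖F‖) * ‖y‖ := by
    intro k y
    have h1 : ‖F₂v k y‖ = ‖ψ k y‖ := LinearIsometryEquiv.norm_map _ _
    rw [h1]
    have h2 : (0 : ℝ) ≤ ‖ℓ k‖ * (‖F‖ * ‖y‖) := by positivity
    refine (LinearMap.mkContinuous_norm_le _ h2 _).trans_eq ?_
    ring
  set F₂c : Fin d → (H₂ →L[ℂ] K₂) := fun k => LinearMap.mkContinuous
    { toFun := F₂v k
      map_add' := fun y y' => by
        show F₂v k (y + y') = F₂v k y + F₂v k y'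
        apply ext_inner_left ℂ
        intro η
        rw [inner_add_right, hF₂inner, hF₂inner, hF₂inner, congrFun (hc_addy η y y') k]
        rfl
      map_smul' := fun a y => by
        show F₂v k (a • y) = (RingHom.id ℂ) a • F₂v k y
        apply ext_inner_left ℂ
        intro η
        rw [inner_smul_right, hF₂inner, hF₂inner]
        rw [congrFun (hc_smuly a η y) k]
        rfl }
    (‖ℓ k‖ * ‖F‖) (fun y => hF₂norm k y) with hF₂c
  have hF₂cinner : ∀ k y η, (inner ℂ η (F₂c k y) : ℂ) = c η y k := fun k y η => hF₂inner k y η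
  -- assemble
  refine ⟨fun j => if h : (j : ℕ) < d then g ⟨j, h⟩ else 0,
          fun j => if h : (j : ℕ) < d then F₂c ⟨j, h⟩ else 0, ?_⟩
  intro x y
  apply ext_of_inner_tmul Q
  intro ξ η
  have hL : (inner ℂ (Q.tmul ξ η) (F (P.tmul x y)) : ℂ)
      = ∑ k, c η y k * inner ℂ ξ (g k x) := by
    rw [← inner_slice, ← hcrepr η y]
    simp only [ContinuousLinearMap.coe_sum', Finset.sum_apply,
      ContinuousLinearMap.coe_smul', Pi.smul_apply, inner_sum, inner_smul_right]
  rw [hL, inner_sum]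
  have hterm : ∀ j : Fin r,
      (inner ℂ (Q.tmul ξ η)
        (Q.tmul ((if h : (j : ℕ) < d then g ⟨j, h⟩ else 0) x)
          ((if h : (j : ℕ) < d then F₂c ⟨j, h⟩ else 0) y)) : ℂ)
      = if h : (j : ℕ) < d then c η y ⟨j, h⟩ * inner ℂ ξ (g ⟨j, h⟩ x) else 0 := by
    intro j
    by_cases h : (j : ℕ) < d
    · rw [dif_pos h, dif_pos h, dif_pos h, Q.inner_tmul, hF₂cinner]
      ring
    · rw [dif_neg h, dif_neg h, dif_neg h]
      simp [Q.inner_tmul]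
  rw [Finset.sum_congr rfl fun j _ => hterm j]
  -- reduce the Fin r sum to a Fin d sum
  have hsum : ∀ (G : Fin d → ℂ),
      (∑ j : Fin r, if h : (j : ℕ) < d then G ⟨j, h⟩ else 0) = ∑ k : Fin d, G k := by
    intro G
    have h2 : ∀ k : Fin d, (if h : (k : ℕ) < d then G ⟨(k : ℕ), h⟩ else 0) = G k := fun k => by
      rw [dif_pos k.isLt]
    calc (∑ j : Fin r, if h : (j : ℕ) < d then G ⟨(j : ℕ), h⟩ else 0)
        = ∑ n ∈ Finset.range r, (if h : n < d then G ⟨n, h⟩ else 0) :=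
          Fin.sum_univ_eq_sum_range (fun n => if h : n < d then G ⟨n, h⟩ else 0) r
      _ = ∑ n ∈ Finset.range d, (if h : n < d then G ⟨n, h⟩ else 0) :=
          (Finset.sum_subset (Finset.range_subset_range.mpr hsr)
            (fun n _ hn => dif_neg (by simpa using hn))).symm
      _ = ∑ k : Fin d, (if h : (k : ℕ) < d then G ⟨(k : ℕ), h⟩ else 0) :=
          (Fin.sum_univ_eq_sum_range (fun n => if h : n < d then G ⟨n, h⟩ else 0) d).symm
      _ = ∑ k : Fin d, G k := Finset.sum_congr rfl fun k _ => h2 k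
  rw [hsum (fun k => c η y k * inner ℂ ξ (g k x))]
end

section
/- Let {e_n} be an orthonormal basis of a separable Hilbert space H and {f_n} a sequence in H, and let F(f) = Σ_n ⟨f, f_n⟩ e_n. Then {f_n} is a Riesz basis for H if and only if F is a bounded invertible operator on H. -/
/-- `f` is a Riesz basis: the image of an orthonormal basis under a bounded invertible map. -/
def IsRieszBasis {H : Type*} [NormedAddCommGroup H] [InnerProductSpace ℂ H] [CompleteSpace H]
    (f : ℕ → H) : Prop :=
  ∃ (U : H ≃L[ℂ] H) (b : HilbertBasis ℕ ℂ H), ∀ n, f n = U (b n)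


section Aux

variable {H : Type*} [NormedAddCommGroup H] [InnerProductSpace ℂ H] [CompleteSpace H]

/-- The adjoint of a continuous linear equivalence, as a continuous linear equivalence. -/
noncomputable def adjointEquiv (U : H ≃L[ℂ] H) : H ≃L[ℂ] H :=
  ContinuousLinearEquiv.equivOfInverse
    (ContinuousLinearMap.adjoint (U : H →L[ℂ] H))
    (ContinuousLinearMap.adjoint (U.symm : H →L[ℂ] H))
    (fun x => by
      have h : ContinuousLinearMap.adjoint (U.symm : H →L[ℂ] H) ∘L
          ContinuousLinearMap.adjoint (U : H →L[ℂ] H) =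
          ContinuousLinearMap.adjoint ((U : H →L[ℂ] H) ∘L (U.symm : H →L[ℂ] H)) := by
        rw [ContinuousLinearMap.adjoint_comp]
      have h2 : (U : H →L[ℂ] H) ∘L (U.symm : H →L[ℂ] H) = ContinuousLinearMap.id ℂ H := by
        ext y; simp
      have := congrArg (fun A => A x) (h.trans (by rw [h2, ContinuousLinearMap.adjoint_id]))
      simpa using this)
    (fun x => by
      have h : ContinuousLinearMap.adjoint (U : H →L[ℂ] H) ∘L
          ContinuousLinearMap.adjoint (U.symm : H →L[ℂ] H) =
          ContinuousLinearMap.adjoint ((U.symm : H →L[ℂ] H) ∘L (U : H →L[ℂ] H)) := by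
        rw [ContinuousLinearMap.adjoint_comp]
      have h2 : (U.symm : H →L[ℂ] H) ∘L (U : H →L[ℂ] H) = ContinuousLinearMap.id ℂ H := by
        ext y; simp
      have := congrArg (fun A => A x) (h.trans (by rw [h2, ContinuousLinearMap.adjoint_id]))
      simpa using this)

theorem adjointEquiv_apply (U : H ≃L[ℂ] H) (y : H) :
    adjointEquiv U y = ContinuousLinearMap.adjoint (U : H →L[ℂ] H) y := rfl

theorem inner_adjointEquiv (U : H ≃L[ℂ] H) (x y : H) :
    (inner ℂ (U x) y : ℂ) = inner ℂ x (adjointEquiv U y) := by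
  rw [adjointEquiv_apply, ContinuousLinearMap.adjoint_inner_right]
  simp

end Aux

/-- A sequence is a Riesz basis iff its analysis operator is a bounded invertible operator. -/
theorem rieszBasis_iff_analysis_operator_invertible
    {H : Type*} [NormedAddCommGroup H] [InnerProductSpace ℂ H] [CompleteSpace H]
    [TopologicalSpace.SeparableSpace H]
    (e : HilbertBasis ℕ ℂ H) (f : ℕ → H) :
    IsRieszBasis f ↔
      ∃ F : H ≃L[ℂ] H,
        ∀ x : H, HasSum (fun n => (inner ℂ (f n) x : ℂ) • (e n : H)) (F x) := by
  constructor
  · rintro ⟨U, b, hf⟩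
    let V : H ≃L[ℂ] H := (b.repr.trans e.repr.symm).toContinuousLinearEquiv
    refine ⟨(adjointEquiv U).trans V, fun x => ?_⟩
    have key : ∀ n, (inner ℂ (f n) x : ℂ) = b.repr (adjointEquiv U x) n := by
      intro n
      rw [hf n, b.repr_apply_apply, inner_adjointEquiv]
    have hrepr : e.repr (V (adjointEquiv U x)) = b.repr (adjointEquiv U x) := by
      simp [V, LinearIsometryEquiv.coe_toContinuousLinearEquiv]
    have hs := e.hasSum_repr (V (adjointEquiv U x))
    rw [hrepr] at hs
    have : ((adjointEquiv U).trans V) x = V (adjointEquiv U x) := rfl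
    rw [this]
    have hfun : (fun n => (inner ℂ (f n) x : ℂ) • (e n : H)) =
        fun n => b.repr (adjointEquiv U x) n • (e n : H) := funext fun n => by rw [key n]
    rw [hfun]
    exact hs
  · rintro ⟨F, hF⟩
    refine ⟨adjointEquiv F, e, fun n => ?_⟩
    refine ext_inner_right ℂ fun x => ?_
    rw [adjointEquiv_apply, ContinuousLinearMap.adjoint_inner_left]
    have h1 := (hF x).mapL (innerSL ℂ (e n))
    have h2 : (fun m => (innerSL ℂ (e n)) ((inner ℂ (f m) x : ℂ) • (e m : H))) =
        fun m => if m = n then (inner ℂ (f n) x : ℂ) else 0 := by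
      funext m
      have horth := orthonormal_iff_ite.mp e.orthonormal n m
      simp only [innerSL_apply_apply, inner_smul_right, horth]
      rcases eq_or_ne m n with h | h
      · subst h; simp
      · simp [h, Ne.symm h]
    rw [h2] at h1
    exact (hasSum_ite_eq n (inner ℂ (f n) x : ℂ)).unique h1
end

section
/- Let {f_{1,k,m}} (k = 1,…,r) be sequences in H₁ and {f_{2,k,n}} (k = 1,…,r) be sequences in H₂ such that for each j ∈ {1,2} the sequences {f_{j,1,·}},…,{f_{j,r,·}} are linearly independent as elements of the space of H_j-valued sequences. If the sequence F = {Σ_{k=1}^r f_{1,k,m} ⊗ f_{2,k,n}}_{m,n} is a Bessel sequence in H₁ ⊗ H₂, then {f_{j,k,n}}_n is a Bessel sequence in H_j for every (j,k) ∈ {1,2} × {1,…,r}. -/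
open scoped ComplexConjugate

lemma extract_dual {H : Type*} [NormedAddCommGroup H] [InnerProductSpace ℂ H]
    {r : ℕ} {f : Fin r → ℕ → H} (hind : LinearIndependent ℂ f) (k : Fin r) :
    ∃ (s : ℕ) (n : Fin s → ℕ) (y : Fin s → H),
      ∀ l, (∑ j, (inner ℂ (f l (n j)) (y j) : ℂ)) = if l = k then 1 else 0 := by
  classical
  set A : ℕ × H → EuclideanSpace ℂ (Fin r) := fun p => WithLp.toLp 2 (fun l => (inner ℂ (f l p.1) p.2 : ℂ)) with hA
  set S : Submodule ℂ (EuclideanSpace ℂ (Fin r)) := Submodule.span ℂ (Set.range A) with hS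
  have hStop : S = ⊤ := by
    by_contra h
    have hne : Sᗮ ≠ ⊥ := fun hb => h (Submodule.orthogonal_eq_bot_iff.mp hb)
    obtain ⟨c, hc, hc0⟩ := Submodule.ne_bot_iff _ |>.mp hne
    have hperp : ∀ (p : ℕ × H), (inner ℂ (A p) c : ℂ) = 0 := fun p =>
      (Submodule.mem_orthogonal S c).mp hc (A p) (Submodule.subset_span ⟨p, rfl⟩)
    have hgz : ∀ m : ℕ, (∑ l, c l • f l m) = 0 := by
      intro m
      have h1 : ∀ yv : H, (inner ℂ yv (∑ l, c l • f l m) : ℂ) = 0 := by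
        intro yv
        have := hperp (m, yv)
        rw [PiLp.inner_apply] at this
        simp only [hA, RCLike.inner_apply] at this ⊢
        rw [inner_sum]
        simp only [inner_smul_right]
        rw [← this]
        congr 1
        ext l
        rw [← inner_conj_symm (f l m) yv]
        simp only [Complex.conj_conj]
      have := h1 (∑ l, c l • f l m)
      rwa [inner_self_eq_zero] at this
    have : ∀ l, c l = 0 := by
      have hsum : (∑ l, c l • f l) = 0 := by
        funext m
        simpa using hgz m
      exact Fintype.linearIndependent_iff.mp hind c hsum
    exact hc0 (by ext l; exact this l)
  have hek : (WithLp.toLp 2 (fun l => if l = k then (1 : ℂ) else 0) : EuclideanSpace ℂ (Fin r)) ∈ S := by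
    rw [hStop]; trivial
  rw [hS, Submodule.mem_span_set'] at hek
  obtain ⟨s, co, g, hg⟩ := hek
  choose p hp using fun i => (g i).2
  refine ⟨s, fun j => (p j).1, fun j => co j • (p j).2, fun l => ?_⟩
  have := congrArg (fun v : EuclideanSpace ℂ (Fin r) => v l) hg
  simp only [← hp] at this
  calc (∑ j, (inner ℂ (f l (p j).1) (co j • (p j).2) : ℂ))
      = ∑ j, co j • (A (p j) l) := by
        refine Finset.sum_congr rfl fun j _ => ?_
        simp [hA, inner_smul_right]
    _ = (∑ j, co j • A (p j)) l := by
        rw [WithLp.ofLp_sum, Finset.sum_apply]; rfl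
    _ = if l = k then 1 else 0 := this

set_option maxHeartbeats 1000000 in
lemma key_bessel {H₁ H₂ T : Type*}
    [NormedAddCommGroup H₁] [InnerProductSpace ℂ H₁]
    [NormedAddCommGroup H₂] [InnerProductSpace ℂ H₂]
    [NormedAddCommGroup T] [InnerProductSpace ℂ T] [CompleteSpace T]
    (P : HilbertTensorProduct H₁ H₂ T)
    (r : ℕ) (f₁ : Fin r → ℕ → H₁) (f₂ : Fin r → ℕ → H₂)
    (hind₂ : LinearIndependent ℂ f₂)
    (hB : IsBessel (fun p : ℕ × ℕ => ∑ k, P.tmul (f₁ k p.1) (f₂ k p.2)))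
    (k : Fin r) : IsBessel (f₁ k) := by
  classical
  obtain ⟨B, hBpos, hBf⟩ := hB
  obtain ⟨s, n, y, hy⟩ := extract_dual hind₂ k
  set F : ℕ × ℕ → T := fun p => ∑ k, P.tmul (f₁ k p.1) (f₂ k p.2) with hF
  have htn : ∀ (a : H₁) (b : H₂), ‖P.tmul a b‖ ^ 2 = ‖a‖ ^ 2 * ‖b‖ ^ 2 := by
    intro a b
    have h := P.inner_tmul a a b b
    rw [inner_self_eq_norm_sq_to_K, inner_self_eq_norm_sq_to_K,
      inner_self_eq_norm_sq_to_K] at h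
    exact_mod_cast h
  refine ⟨(s : ℝ) * B * (∑ j, ‖y j‖ ^ 2) + 1, by positivity, fun x => ?_⟩
  have hinj : ∀ j : Fin s, Function.Injective (fun m : ℕ => (m, n j)) := by
    intro j a b h
    exact (Prod.ext_iff.mp h).1
  have hid : ∀ m : ℕ,
      (inner ℂ (f₁ k m) x : ℂ) = ∑ j, (inner ℂ (F (m, n j)) (P.tmul x (y j)) : ℂ) := by
    intro m
    have h1 : ∀ j, (inner ℂ (F (m, n j)) (P.tmul x (y j)) : ℂ)
        = ∑ l, (inner ℂ (f₁ l m) x : ℂ) * (inner ℂ (f₂ l (n j)) (y j) : ℂ) := by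
      intro j
      rw [hF]
      simp only
      rw [sum_inner]
      exact Finset.sum_congr rfl fun l _ => P.inner_tmul _ _ _ _
    calc (inner ℂ (f₁ k m) x : ℂ)
        = ∑ l, (inner ℂ (f₁ l m) x : ℂ) * (if l = k then 1 else 0) := by
          simp
      _ = ∑ l, (inner ℂ (f₁ l m) x : ℂ) * ∑ j, (inner ℂ (f₂ l (n j)) (y j) : ℂ) := by
          simp_rw [hy]
      _ = ∑ j, ∑ l, (inner ℂ (f₁ l m) x : ℂ) * (inner ℂ (f₂ l (n j)) (y j) : ℂ) := by
          simp_rw [Finset.mul_sum]; rw [Finset.sum_comm]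
      _ = ∑ j, (inner ℂ (F (m, n j)) (P.tmul x (y j)) : ℂ) := by
          simp_rw [h1]
  have hsum_j : ∀ j : Fin s,
      Summable (fun m : ℕ => ‖(inner ℂ (F (m, n j)) (P.tmul x (y j)) : ℂ)‖ ^ 2) :=
    fun j => (hBf (P.tmul x (y j))).1.comp_injective (hinj j)
  have htsum_j : ∀ j : Fin s,
      ∑' m, ‖(inner ℂ (F (m, n j)) (P.tmul x (y j)) : ℂ)‖ ^ 2
        ≤ B * (‖x‖ ^ 2 * ‖y j‖ ^ 2) := by
    intro j
    have h1 := Summable.tsum_le_tsum_of_inj (fun m : ℕ => (m, n j)) (hinj j)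
      (fun c _ => by positivity) (fun m => le_rfl) (hsum_j j)
      (hBf (P.tmul x (y j))).1
    refine h1.trans ((hBf (P.tmul x (y j))).2.trans ?_)
    rw [htn]
  have hCS : ∀ m : ℕ, ‖(inner ℂ (f₁ k m) x : ℂ)‖ ^ 2
      ≤ (s : ℝ) * ∑ j, ‖(inner ℂ (F (m, n j)) (P.tmul x (y j)) : ℂ)‖ ^ 2 := by
    intro m
    rw [hid m]
    calc ‖∑ j, (inner ℂ (F (m, n j)) (P.tmul x (y j)) : ℂ)‖ ^ 2
        ≤ (∑ j, ‖(inner ℂ (F (m, n j)) (P.tmul x (y j)) : ℂ)‖) ^ 2 := by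
          exact pow_le_pow_left₀ (norm_nonneg _) (norm_sum_le _ _) 2
      _ ≤ (s : ℝ) * ∑ j, ‖(inner ℂ (F (m, n j)) (P.tmul x (y j)) : ℂ)‖ ^ 2 := by
          simpa using sq_sum_le_card_mul_sum_sq
            (s := (Finset.univ : Finset (Fin s)))
            (f := fun j => ‖(inner ℂ (F (m, n j)) (P.tmul x (y j)) : ℂ)‖)
  have hg : Summable (fun m : ℕ =>
      (s : ℝ) * ∑ j, ‖(inner ℂ (F (m, n j)) (P.tmul x (y j)) : ℂ)‖ ^ 2) :=
    (summable_sum fun j _ => hsum_j j).mul_left _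
  have hsumm : Summable (fun m : ℕ => ‖(inner ℂ (f₁ k m) x : ℂ)‖ ^ 2) :=
    Summable.of_nonneg_of_le (fun m => by positivity) hCS hg
  refine ⟨hsumm, ?_⟩
  calc ∑' m, ‖(inner ℂ (f₁ k m) x : ℂ)‖ ^ 2
      ≤ ∑' m, (s : ℝ) * ∑ j, ‖(inner ℂ (F (m, n j)) (P.tmul x (y j)) : ℂ)‖ ^ 2 :=
        Summable.tsum_le_tsum hCS hsumm hg
    _ = (s : ℝ) * ∑ j, ∑' m, ‖(inner ℂ (F (m, n j)) (P.tmul x (y j)) : ℂ)‖ ^ 2 := by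
        rw [tsum_mul_left]
        congr 1
        exact Summable.tsum_finsetSum fun j _ => hsum_j j
    _ ≤ (s : ℝ) * ∑ j, B * (‖x‖ ^ 2 * ‖y j‖ ^ 2) := by
        exact mul_le_mul_of_nonneg_left
          (Finset.sum_le_sum fun j _ => htsum_j j) (Nat.cast_nonneg s)
    _ = ((s : ℝ) * B * ∑ j, ‖y j‖ ^ 2) * ‖x‖ ^ 2 := by
        rw [← Finset.mul_sum]
        ring_nf
        rw [← Finset.mul_sum]
        ring
    _ ≤ ((s : ℝ) * B * ∑ j, ‖y j‖ ^ 2 + 1) * ‖x‖ ^ 2 := by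
        have : (0:ℝ) ≤ ‖x‖ ^ 2 := by positivity
        nlinarith

lemma IsBessel.comp_equiv {H : Type*} [NormedAddCommGroup H] [InnerProductSpace ℂ H]
    {ι κ : Type*} {f : ι → H} (hf : IsBessel f) (e : κ ≃ ι) :
    IsBessel (fun j => f (e j)) := by
  obtain ⟨B, hB, h⟩ := hf
  refine ⟨B, hB, fun x => ?_⟩
  obtain ⟨h1, h2⟩ := h x
  refine ⟨h1.comp_injective e.injective, ?_⟩
  rw [show (fun j => ‖(inner ℂ (f (e j)) x : ℂ)‖ ^ 2)
      = (fun i => ‖(inner ℂ (f i) x : ℂ)‖ ^ 2) ∘ e from rfl]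
  rw [Function.comp_def, e.tsum_eq (fun i => ‖(inner ℂ (f i) x : ℂ)‖ ^ 2)]
  exact h2

/-- Swap the factors of a Hilbert tensor product structure. -/
def HilbertTensorProduct.swap {H K T : Type*}
    [NormedAddCommGroup H] [InnerProductSpace ℂ H]
    [NormedAddCommGroup K] [InnerProductSpace ℂ K]
    [NormedAddCommGroup T] [InnerProductSpace ℂ T] [CompleteSpace T]
    (P : HilbertTensorProduct H K T) : HilbertTensorProduct K H T where
  tmul := P.tmul.flip
  inner_tmul := fun y y' x x' => by
    rw [LinearMap.flip_apply, LinearMap.flip_apply, P.inner_tmul, mul_comm]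
  dense_span := by
    have : (Set.range fun p : K × H => P.tmul.flip p.1 p.2)
        = (Set.range fun p : H × K => P.tmul p.1 p.2) := by
      ext z
      constructor
      · rintro ⟨⟨a, b⟩, rfl⟩; exact ⟨(b, a), rfl⟩
      · rintro ⟨⟨a, b⟩, rfl⟩; exact ⟨(b, a), rfl⟩
    rw [this]
    exact P.dense_span

/-- If a minimal sum of tensor products of sequences is Bessel, then every component sequence
is Bessel. -/
theorem bessel_of_sum_tensor_bessel
    {H₁ H₂ T : Type*}
    [NormedAddCommGroup H₁] [InnerProductSpace ℂ H₁] [CompleteSpace H₁] [TopologicalSpace.SeparableSpace H₁]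
    [NormedAddCommGroup H₂] [InnerProductSpace ℂ H₂] [CompleteSpace H₂] [TopologicalSpace.SeparableSpace H₂]
    [NormedAddCommGroup T] [InnerProductSpace ℂ T] [CompleteSpace T] [TopologicalSpace.SeparableSpace T]
    (P : HilbertTensorProduct H₁ H₂ T)
    (r : ℕ) (f₁ : Fin r → ℕ → H₁) (f₂ : Fin r → ℕ → H₂)
    (hind₁ : LinearIndependent ℂ f₁) (hind₂ : LinearIndependent ℂ f₂)
    (hB : IsBessel (fun p : ℕ × ℕ => ∑ k, P.tmul (f₁ k p.1) (f₂ k p.2))) :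
    (∀ k, IsBessel (f₁ k)) ∧ (∀ k, IsBessel (f₂ k)) := by
  constructor
  · exact fun k => key_bessel P r f₁ f₂ hind₂ hB k
  · intro k
    have hB' : IsBessel
        (fun p : ℕ × ℕ => ∑ k, (P.swap).tmul (f₂ k p.1) (f₁ k p.2)) := by
      have h := IsBessel.comp_equiv hB (Equiv.prodComm ℕ ℕ)
      exact h
    exact key_bessel P.swap r f₂ f₁ hind₁ hB' k
end

section
/- Under the hypotheses of the previous setting, if {f_{j,k,n}}_n is a Bessel sequence in H_j for every (j,k) ∈ {1,2} × {1,…,r}, then the sequence {Σ_{k=1}^r f_{1,k,m} ⊗ f_{2,k,n}}_{m,n} is a Bessel sequence in H₁ ⊗ H₂. -/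
section Aux

set_option linter.unusedSectionVars false
set_option maxHeartbeats 1000000

open scoped ComplexConjugate

variable {H₁ H₂ T : Type*}
    [NormedAddCommGroup H₁] [InnerProductSpace ℂ H₁] [CompleteSpace H₁]
    [NormedAddCommGroup H₂] [InnerProductSpace ℂ H₂] [CompleteSpace H₂]
    [NormedAddCommGroup T] [InnerProductSpace ℂ T] [CompleteSpace T]

namespace HilbertTensorProduct

theorem norm_tmul (P : HilbertTensorProduct H₁ H₂ T) (u : H₁) (v : H₂) :
    ‖P.tmul u v‖ = ‖u‖ * ‖v‖ := by
  have h := P.inner_tmul u u v v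
  rw [inner_self_eq_norm_sq_to_K, inner_self_eq_norm_sq_to_K, inner_self_eq_norm_sq_to_K] at h
  have h2 : ‖P.tmul u v‖ ^ 2 = ‖u‖ ^ 2 * ‖v‖ ^ 2 := by exact_mod_cast h
  nlinarith [norm_nonneg (P.tmul u v), mul_nonneg (norm_nonneg u) (norm_nonneg v)]

/-- `tmul` with fixed first argument, as a continuous linear map. -/
noncomputable def tmulR (P : HilbertTensorProduct H₁ H₂ T) (u : H₁) : H₂ →L[ℂ] T :=
  LinearMap.mkContinuous (P.tmul u) ‖u‖ (fun v => by rw [P.norm_tmul])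

@[simp] theorem tmulR_apply (P : HilbertTensorProduct H₁ H₂ T) (u : H₁) (v : H₂) :
    P.tmulR u v = P.tmul u v := rfl

/-- The flipped tensor product structure. -/
noncomputable def flip (P : HilbertTensorProduct H₁ H₂ T) : HilbertTensorProduct H₂ H₁ T where
  tmul := P.tmul.flip
  inner_tmul := fun x x' y y' => by
    simpa [mul_comm] using P.inner_tmul y y' x x'
  dense_span := by
    have : (Set.range fun p : H₂ × H₁ => P.tmul.flip p.1 p.2)
        = (Set.range fun p : H₁ × H₂ => P.tmul p.1 p.2) := by
      ext t
      constructor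
      · rintro ⟨⟨a, b⟩, rfl⟩; exact ⟨⟨b, a⟩, rfl⟩
      · rintro ⟨⟨a, b⟩, rfl⟩; exact ⟨⟨b, a⟩, rfl⟩
    rw [this]
    exact P.dense_span

@[simp] theorem flip_tmul (P : HilbertTensorProduct H₁ H₂ T) (v : H₂) (u : H₁) :
    P.flip.tmul v u = P.tmul u v := rfl

end HilbertTensorProduct

set_option linter.unusedSectionVars false

theorem rpow_two_eq_pow_two (x : ℝ) : x ^ (2:ℝ) = x ^ (2:ℕ) := by
  rw [show (2:ℝ) = ((2:ℕ):ℝ) by norm_num, Real.rpow_natCast]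

/-- Given `x : T` and `u : H₁`, there is a vector `xu : H₂` with
`⟪u ⊗ y, x⟫ = ⟪y, xu⟫` for all `y`, whose norm is described by the basis coefficients. -/
theorem HilbertTensorProduct.exists_slice (P : HilbertTensorProduct H₁ H₂ T)
    {ι : Type*} (c : HilbertBasis ι ℂ H₂) (x : T) (u : H₁) :
    ∃ xu : H₂, (∀ y : H₂, (inner ℂ (P.tmul u y) x : ℂ) = inner ℂ y xu) ∧
      Summable (fun i => ‖(inner ℂ (P.tmul u (c i)) x : ℂ)‖ ^ 2) ∧
      ‖xu‖ ^ 2 = ∑' i, ‖(inner ℂ (P.tmul u (c i)) x : ℂ)‖ ^ 2 := by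
  set a : ι → ℂ := fun i => inner ℂ (P.tmul u (c i)) x with ha
  have hbound : ∀ F : Finset ι, ∑ i ∈ F, ‖a i‖ ^ 2 ≤ ‖u‖ ^ 2 * ‖x‖ ^ 2 := by
    intro F
    set S : ℝ := ∑ i ∈ F, ‖a i‖ ^ 2 with hS
    have hS0 : 0 ≤ S := Finset.sum_nonneg fun i _ => sq_nonneg _
    set y : H₂ := ∑ i ∈ F, a i • c i with hy
    have hinner : (inner ℂ (P.tmul u y) x : ℂ) = ((S : ℝ) : ℂ) := by
      rw [hy, map_sum, sum_inner]
      have h5 : ∀ i ∈ F, (inner ℂ (P.tmul u (a i • c i)) x : ℂ) = ((‖a i‖ : ℂ)) ^ 2 := by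
        intro i _
        rw [map_smul, inner_smul_left]
        exact RCLike.conj_mul (a i)
      rw [Finset.sum_congr rfl h5, hS]
      push_cast
      ring
    have hny : ‖y‖ ^ 2 = S := by
      have h1 : (inner ℂ y y : ℂ) = ((S : ℝ) : ℂ) := by
        rw [hy, Orthonormal.inner_sum c.orthonormal a a F]
        have h5 : ∀ i ∈ F, (starRingEnd ℂ) (a i) * a i = ((‖a i‖ : ℂ)) ^ 2 := fun i _ =>
          RCLike.conj_mul (a i)
        rw [Finset.sum_congr rfl h5, hS]
        push_cast
        ring
      rw [inner_self_eq_norm_sq_to_K] at h1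
      have h2 : ((‖y‖ ^ 2 : ℝ) : ℂ) = ((S : ℝ) : ℂ) := by push_cast; exact h1
      exact_mod_cast h2
    have hle : S ≤ ‖u‖ * ‖y‖ * ‖x‖ := by
      calc S = ‖((S : ℝ) : ℂ)‖ := by simp [abs_of_nonneg hS0]
        _ = ‖(inner ℂ (P.tmul u y) x : ℂ)‖ := by rw [hinner]
        _ ≤ ‖P.tmul u y‖ * ‖x‖ := norm_inner_le_norm _ _
        _ = ‖u‖ * ‖y‖ * ‖x‖ := by rw [P.norm_tmul]
    nlinarith [norm_nonneg y, norm_nonneg u, norm_nonneg x, sq_nonneg (‖u‖ * ‖x‖)]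
  have hsum : Summable fun i => ‖a i‖ ^ 2 :=
    summable_of_sum_le (fun i => sq_nonneg _) hbound
  have hmem : Memℓp a 2 := by
    apply memℓp_gen
    have h2 : (2 : ENNReal).toReal = (2 : ℝ) := by norm_num
    rw [h2]
    simpa [rpow_two_eq_pow_two] using hsum
  set xu : H₂ := c.repr.symm ⟨a, hmem⟩ with hxu
  have hrepr : c.repr xu = ⟨a, hmem⟩ := c.repr.apply_symm_apply _
  have hcoef : ∀ i, (inner ℂ (c i) xu : ℂ) = a i := by
    intro i
    rw [← c.repr_apply_apply, hrepr]
  refine ⟨xu, ?_, hsum, ?_⟩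
  · intro y
    have h1 : HasSum (fun i => c.repr y i * (inner ℂ x (P.tmul u (c i)) : ℂ))
        (inner ℂ x (P.tmul u y) : ℂ) := by
      have := (c.hasSum_repr y).mapL ((innerSL ℂ x).comp (P.tmulR u))
      simpa [smul_eq_mul] using this
    have h2 : HasSum
        (fun i => (starRingEnd ℂ) (c.repr y i) * (inner ℂ (P.tmul u (c i)) x : ℂ))
        (inner ℂ (P.tmul u y) x : ℂ) := by
      simpa only [star_mul', RCLike.star_def, inner_conj_symm] using h1.star
    have h4 := c.tsum_inner_mul_inner y xu
    rw [← h4, ← h2.tsum_eq]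
    apply tsum_congr
    intro i
    rw [hcoef, c.repr_apply_apply, inner_conj_symm]
  · have hn : ‖xu‖ = ‖(⟨a, hmem⟩ : lp (fun _ : ι => ℂ) 2)‖ := by
      rw [← hrepr]; exact (c.repr.norm_map xu).symm
    have h2 : (0:ℝ) < (2 : ENNReal).toReal := by norm_num
    have hlp := lp.norm_rpow_eq_tsum h2 (⟨a, hmem⟩ : lp (fun _ : ι => ℂ) 2)
    have h3 : (2 : ENNReal).toReal = (2 : ℝ) := by norm_num
    rw [h3] at hlp
    rw [hn]
    calc ‖(⟨a, hmem⟩ : lp (fun _ : ι => ℂ) 2)‖ ^ 2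
        = ‖(⟨a, hmem⟩ : lp (fun _ : ι => ℂ) 2)‖ ^ (2:ℝ) := (rpow_two_eq_pow_two _).symm
      _ = ∑' i, ‖a i‖ ^ (2:ℝ) := hlp
      _ = ∑' i, ‖a i‖ ^ 2 := tsum_congr fun i => rpow_two_eq_pow_two _

/-- A `HasSum` limit of elements of a closed submodule lies in the submodule. -/
theorem hasSum_mem_of_isClosed {E : Type*} [NormedAddCommGroup E] [Module ℂ E]
    {M : Submodule ℂ E} (hM : IsClosed (M : Set E)) {ι : Type*} {f : ι → E} {a : E}
    (hf : HasSum f a) (hmem : ∀ i, f i ∈ M) : a ∈ M := by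
  refine hM.mem_of_tendsto hf (Filter.Eventually.of_forall fun F => ?_)
  exact Submodule.sum_mem M fun i _ => hmem i

namespace HilbertTensorProduct

/-- The tensor products of two Hilbert bases form a Hilbert basis of `T`. -/
noncomputable def tensorBasis (P : HilbertTensorProduct H₁ H₂ T)
    {ι₁ ι₂ : Type*} (b : HilbertBasis ι₁ ℂ H₁) (c : HilbertBasis ι₂ ℂ H₂) :
    HilbertBasis (ι₁ × ι₂) ℂ T := by
  classical
  have horth : Orthonormal ℂ (fun p : ι₁ × ι₂ => P.tmul (b p.1) (c p.2)) := by
    rw [orthonormal_iff_ite]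
    intro p q
    rw [P.inner_tmul, orthonormal_iff_ite.mp b.orthonormal p.1 q.1,
      orthonormal_iff_ite.mp c.orthonormal p.2 q.2]
    by_cases h1 : p.1 = q.1 <;> by_cases h2 : p.2 = q.2 <;>
      simp [h1, h2, Prod.ext_iff]
  refine HilbertBasis.mk horth ?_
  set M := (Submodule.span ℂ
    (Set.range fun p : ι₁ × ι₂ => P.tmul (b p.1) (c p.2))).topologicalClosure with hM
  have hMc : IsClosed (M : Set T) := Submodule.isClosed_topologicalClosure _
  have step1 : ∀ (l : ι₁) (w : H₂), P.tmul (b l) w ∈ M := by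
    intro l w
    have hs : HasSum (fun i => c.repr w i • P.tmul (b l) (c i)) (P.tmul (b l) w) := by
      have := (c.hasSum_repr w).mapL (P.tmulR (b l))
      simpa using this
    refine hasSum_mem_of_isClosed hMc hs fun i => ?_
    exact Submodule.smul_mem _ _ ((Submodule.span ℂ _).le_topologicalClosure
      (Submodule.subset_span ⟨(l, i), rfl⟩))
  have step2 : ∀ (u : H₁) (w : H₂), P.tmul u w ∈ M := by
    intro u w
    have hs : HasSum (fun l => b.repr u l • P.tmul (b l) w) (P.tmul u w) := by
      have := (b.hasSum_repr u).mapL (P.flip.tmulR w)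
      simpa using this
    exact hasSum_mem_of_isClosed hMc hs fun l =>
      Submodule.smul_mem _ _ (step1 l w)
  intro t _
  have hd : Dense ((Submodule.span ℂ
      (Set.range fun p : H₁ × H₂ => P.tmul p.1 p.2) : Submodule ℂ T) : Set T) :=
    P.dense_span
  have hle : (Submodule.span ℂ (Set.range fun p : H₁ × H₂ => P.tmul p.1 p.2)) ≤ M := by
    rw [Submodule.span_le]
    rintro _ ⟨⟨u, w⟩, rfl⟩
    exact step2 u w
  have : closure ((Submodule.span ℂ
      (Set.range fun p : H₁ × H₂ => P.tmul p.1 p.2) : Submodule ℂ T) : Set T) ⊆ (M : Set T) :=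
    closure_minimal hle hMc
  have ht : t ∈ closure ((Submodule.span ℂ
      (Set.range fun p : H₁ × H₂ => P.tmul p.1 p.2) : Submodule ℂ T) : Set T) := by
    rw [hd.closure_eq]; trivial
  exact this ht

@[simp] theorem tensorBasis_apply (P : HilbertTensorProduct H₁ H₂ T)
    {ι₁ ι₂ : Type*} (b : HilbertBasis ι₁ ℂ H₁) (c : HilbertBasis ι₂ ℂ H₂) (p : ι₁ × ι₂) :
    P.tensorBasis b c p = P.tmul (b p.1) (c p.2) := by
  rw [tensorBasis, HilbertBasis.coe_mk]

/-- Parseval identity for the tensor basis. -/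
theorem parseval (P : HilbertTensorProduct H₁ H₂ T)
    {ι₁ ι₂ : Type*} (b : HilbertBasis ι₁ ℂ H₁) (c : HilbertBasis ι₂ ℂ H₂) (x : T) :
    Summable (fun p : ι₁ × ι₂ => ‖(inner ℂ (P.tmul (b p.1) (c p.2)) x : ℂ)‖ ^ 2) ∧
    ∑' p : ι₁ × ι₂, ‖(inner ℂ (P.tmul (b p.1) (c p.2)) x : ℂ)‖ ^ 2 = ‖x‖ ^ 2 := by
  set bT := P.tensorBasis b c with hbT
  have hco : ∀ p : ι₁ × ι₂, bT.repr x p = (inner ℂ (P.tmul (b p.1) (c p.2)) x : ℂ) := by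
    intro p
    rw [bT.repr_apply_apply, tensorBasis_apply]
  have hmem : Memℓp (fun p : ι₁ × ι₂ => (inner ℂ (P.tmul (b p.1) (c p.2)) x : ℂ)) 2 := by
    have := lp.memℓp (bT.repr x)
    rw [show (fun p : ι₁ × ι₂ => (inner ℂ (P.tmul (b p.1) (c p.2)) x : ℂ)) = ⇑(bT.repr x) from
      funext fun p => (hco p).symm]
    exact this
  have h2 : (0:ℝ) < (2 : ENNReal).toReal := by norm_num
  have hsum : Summable (fun p : ι₁ × ι₂ => ‖(inner ℂ (P.tmul (b p.1) (c p.2)) x : ℂ)‖ ^ 2) := by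
    have := (memℓp_gen_iff h2).mp hmem
    have h3 : (2 : ENNReal).toReal = (2 : ℝ) := by norm_num
    rw [h3] at this
    simpa [rpow_two_eq_pow_two] using this
  refine ⟨hsum, ?_⟩
  have hn : ‖bT.repr x‖ = ‖x‖ := bT.repr.norm_map x
  have hlp := lp.norm_rpow_eq_tsum h2 (bT.repr x)
  have h3 : (2 : ENNReal).toReal = (2 : ℝ) := by norm_num
  rw [h3, hn] at hlp
  calc ∑' p : ι₁ × ι₂, ‖(inner ℂ (P.tmul (b p.1) (c p.2)) x : ℂ)‖ ^ 2
      = ∑' p, ‖bT.repr x p‖ ^ (2:ℝ) :=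
        tsum_congr fun p => by rw [hco, rpow_two_eq_pow_two]
    _ = ‖x‖ ^ (2:ℝ) := hlp.symm
    _ = ‖x‖ ^ 2 := rpow_two_eq_pow_two _

end HilbertTensorProduct

set_option maxHeartbeats 1000000 in
/-- Core estimate: the tensor product of two Bessel sequences is Bessel, with bound `B₁ * B₂`. -/
theorem HilbertTensorProduct.tensor_bessel (P : HilbertTensorProduct H₁ H₂ T)
    {f : ℕ → H₁} {g : ℕ → H₂} {B₁ B₂ : ℝ} (hB₁ : 0 ≤ B₁) (hB₂ : 0 ≤ B₂)
    (hf : ∀ x : H₁, Summable (fun m => ‖(inner ℂ (f m) x : ℂ)‖ ^ 2) ∧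
      ∑' m, ‖(inner ℂ (f m) x : ℂ)‖ ^ 2 ≤ B₁ * ‖x‖ ^ 2)
    (hg : ∀ x : H₂, Summable (fun n => ‖(inner ℂ (g n) x : ℂ)‖ ^ 2) ∧
      ∑' n, ‖(inner ℂ (g n) x : ℂ)‖ ^ 2 ≤ B₂ * ‖x‖ ^ 2)
    (x : T) :
    Summable (fun p : ℕ × ℕ => ‖(inner ℂ (P.tmul (f p.1) (g p.2)) x : ℂ)‖ ^ 2) ∧
    ∑' p : ℕ × ℕ, ‖(inner ℂ (P.tmul (f p.1) (g p.2)) x : ℂ)‖ ^ 2 ≤ B₁ * B₂ * ‖x‖ ^ 2 := by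
  obtain ⟨w₁, b, hb⟩ := exists_hilbertBasis ℂ H₁
  obtain ⟨w₂, c, hc⟩ := exists_hilbertBasis ℂ H₂
  -- slice vectors in the second factor, one for each `m`
  choose X hX1 hX2 hX3 using fun m => P.exists_slice c x (f m)
  -- slice vectors in the first factor, one for each basis index `i`
  choose Z hZ1 hZ2 hZ3 using fun i : w₂ => P.flip.exists_slice b x (c i)
  -- Parseval for the tensor basis
  obtain ⟨hQsum, hQtsum⟩ := P.parseval b c x
  set Q : w₁ × w₂ → ℝ := fun p => ‖(inner ℂ (P.tmul (b p.1) (c p.2)) x : ℂ)‖ ^ 2 with hQ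
  have hQnn : ∀ p, 0 ≤ Q p := fun p => sq_nonneg _
  -- `Q` summed over the swapped product
  have hQsum' : Summable (fun q : w₂ × w₁ => Q (q.2, q.1)) := by
    exact ((Equiv.prodComm w₂ w₁).summable_iff).mpr hQsum
  have hZnorm : ∀ i : w₂, ‖Z i‖ ^ 2 = ∑' l : w₁, Q (l, i) := by
    intro i
    rw [hZ3 i]
    exact tsum_congr fun l => by rw [P.flip_tmul]
  have hQrow : ∀ i : w₂, Summable fun l : w₁ => Q (l, i) := by
    intro i
    have := hZ2 i
    refine this.congr fun l => ?_
    rw [P.flip_tmul]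
  have hZsummable : Summable fun i : w₂ => ‖Z i‖ ^ 2 := by
    have h := (summable_prod_of_nonneg (fun q => hQnn _)).mp hQsum'
    refine h.2.congr fun i => ?_
    rw [hZnorm i]
  have hZtsum : ∑' i : w₂, ‖Z i‖ ^ 2 = ‖x‖ ^ 2 := by
    calc ∑' i : w₂, ‖Z i‖ ^ 2 = ∑' i : w₂, ∑' l : w₁, Q (l, i) := tsum_congr hZnorm
      _ = ∑' q : w₂ × w₁, Q (q.2, q.1) := (Summable.tsum_prod' hQsum' fun i => hQrow i).symm
      _ = ∑' p : w₁ × w₂, Q p := ((Equiv.prodComm w₂ w₁).tsum_eq _)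
      _ = ‖x‖ ^ 2 := hQtsum
  -- the doubly-indexed family of coefficients in the mixed basis
  set F : ℕ × w₂ → ℝ := fun q => ‖(inner ℂ (P.tmul (f q.1) (c q.2)) x : ℂ)‖ ^ 2 with hF
  have hFnn : ∀ q, 0 ≤ F q := fun q => sq_nonneg _
  have hcol : ∀ i : w₂, Summable (fun m => F (m, i)) ∧
      ∑' m, F (m, i) ≤ B₁ * ‖Z i‖ ^ 2 := by
    intro i
    have hcoe : ∀ m, (inner ℂ (P.tmul (f m) (c i)) x : ℂ) = inner ℂ (f m) (Z i) := by
      intro m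
      rw [← P.flip_tmul, hZ1 i (f m)]
    obtain ⟨hs, hle⟩ := hf (Z i)
    constructor
    · exact hs.congr fun m => by rw [hF]; simp only [hcoe m]
    · calc ∑' m, F (m, i) = ∑' m, ‖(inner ℂ (f m) (Z i) : ℂ)‖ ^ 2 :=
            tsum_congr fun m => by rw [hF]; simp only [hcoe m]
        _ ≤ B₁ * ‖Z i‖ ^ 2 := hle
  have hFsum' : Summable (fun q : w₂ × ℕ => F (q.2, q.1)) := by
    rw [summable_prod_of_nonneg (fun q => hFnn _)]
    refine ⟨fun i => (hcol i).1, ?_⟩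
    refine Summable.of_nonneg_of_le (fun i => tsum_nonneg fun m => hFnn _)
      (fun i => (hcol i).2) ?_
    exact hZsummable.mul_left B₁
  have hFsum : Summable F := by
    have h := hFsum'.prod_symm
    exact h.congr fun q => rfl
  have hXnorm : ∀ m, ‖X m‖ ^ 2 = ∑' i : w₂, F (m, i) := fun m => hX3 m
  have hXsummable : Summable fun m => ‖X m‖ ^ 2 := by
    have h := (summable_prod_of_nonneg (fun q => hFnn _)).mp hFsum
    refine h.2.congr fun m => ?_
    rw [hXnorm m]
  have hXtsum : ∑' m, ‖X m‖ ^ 2 ≤ B₁ * ‖x‖ ^ 2 := by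
    have e1 : ∑' m, ‖X m‖ ^ 2 = ∑' q : w₂ × ℕ, F (q.2, q.1) := by
      calc ∑' m, ‖X m‖ ^ 2 = ∑' m, ∑' i : w₂, F (m, i) := tsum_congr hXnorm
        _ = ∑' p : ℕ × w₂, F p := (Summable.tsum_prod' hFsum fun m =>
            ((summable_prod_of_nonneg (fun q => hFnn _)).mp hFsum).1 m).symm
        _ = ∑' q : w₂ × ℕ, F (q.2, q.1) := ((Equiv.prodComm w₂ ℕ).tsum_eq _).symm
    rw [e1, Summable.tsum_prod' hFsum' (fun i => (hcol i).1)]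
    calc ∑' i : w₂, ∑' m, F (m, i) ≤ ∑' i : w₂, B₁ * ‖Z i‖ ^ 2 := by
          refine Summable.tsum_le_tsum (fun i => (hcol i).2) ?_ (hZsummable.mul_left B₁)
          refine Summable.of_nonneg_of_le (fun i => tsum_nonneg fun m => hFnn _)
            (fun i => (hcol i).2) (hZsummable.mul_left B₁)
      _ = B₁ * ∑' i : w₂, ‖Z i‖ ^ 2 := tsum_mul_left
      _ = B₁ * ‖x‖ ^ 2 := by rw [hZtsum]
  -- now the actual target family
  set D : ℕ × ℕ → ℝ := fun p => ‖(inner ℂ (P.tmul (f p.1) (g p.2)) x : ℂ)‖ ^ 2 with hD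
  have hDnn : ∀ p, 0 ≤ D p := fun p => sq_nonneg _
  have hrow : ∀ m, Summable (fun n => D (m, n)) ∧ ∑' n, D (m, n) ≤ B₂ * ‖X m‖ ^ 2 := by
    intro m
    have hcoe : ∀ n, (inner ℂ (P.tmul (f m) (g n)) x : ℂ) = inner ℂ (g n) (X m) :=
      fun n => hX1 m (g n)
    obtain ⟨hs, hle⟩ := hg (X m)
    constructor
    · exact hs.congr fun n => by rw [hD]; simp only [hcoe n]
    · calc ∑' n, D (m, n) = ∑' n, ‖(inner ℂ (g n) (X m) : ℂ)‖ ^ 2 :=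
            tsum_congr fun n => by rw [hD]; simp only [hcoe n]
        _ ≤ B₂ * ‖X m‖ ^ 2 := hle
  have hrowsum : Summable fun m => ∑' n, D (m, n) :=
    Summable.of_nonneg_of_le (fun m => tsum_nonneg fun n => hDnn _)
      (fun m => (hrow m).2) (hXsummable.mul_left B₂)
  have hDsum : Summable D := by
    rw [summable_prod_of_nonneg (fun p => hDnn _)]
    exact ⟨fun m => (hrow m).1, hrowsum⟩
  refine ⟨hDsum, ?_⟩
  have : ∑' p : ℕ × ℕ, ‖(inner ℂ (P.tmul (f p.1) (g p.2)) x : ℂ)‖ ^ 2 = ∑' m, ∑' n, D (m, n) :=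
    Summable.tsum_prod' hDsum fun m => (hrow m).1
  rw [this]
  calc ∑' m, ∑' n, D (m, n) ≤ ∑' m, B₂ * ‖X m‖ ^ 2 :=
        Summable.tsum_le_tsum (fun m => (hrow m).2) hrowsum (hXsummable.mul_left B₂)
    _ = B₂ * ∑' m, ‖X m‖ ^ 2 := tsum_mul_left
    _ ≤ B₂ * (B₁ * ‖x‖ ^ 2) := by
        exact mul_le_mul_of_nonneg_left hXtsum hB₂
    _ = B₁ * B₂ * ‖x‖ ^ 2 := by ring

end Aux

set_option maxHeartbeats 1000000

/-- If every component sequence is Bessel, then the sum of tensor products is Bessel. -/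
theorem sum_tensor_bessel_of_bessel
    {H₁ H₂ T : Type*}
    [NormedAddCommGroup H₁] [InnerProductSpace ℂ H₁] [CompleteSpace H₁] [TopologicalSpace.SeparableSpace H₁]
    [NormedAddCommGroup H₂] [InnerProductSpace ℂ H₂] [CompleteSpace H₂] [TopologicalSpace.SeparableSpace H₂]
    [NormedAddCommGroup T] [InnerProductSpace ℂ T] [CompleteSpace T] [TopologicalSpace.SeparableSpace T]
    (P : HilbertTensorProduct H₁ H₂ T)
    (r : ℕ) (f₁ : Fin r → ℕ → H₁) (f₂ : Fin r → ℕ → H₂)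
    (h₁ : ∀ k, IsBessel (f₁ k)) (h₂ : ∀ k, IsBessel (f₂ k)) :
    IsBessel (fun p : ℕ × ℕ => ∑ k, P.tmul (f₁ k p.1) (f₂ k p.2)) := by
  choose B₁ hB₁pos hB₁ using h₁
  choose B₂ hB₂pos hB₂ using h₂
  have hk : ∀ (k : Fin r) (x : T),
      Summable (fun p : ℕ × ℕ => ‖(inner ℂ (P.tmul (f₁ k p.1) (f₂ k p.2)) x : ℂ)‖ ^ 2) ∧
      ∑' p : ℕ × ℕ, ‖(inner ℂ (P.tmul (f₁ k p.1) (f₂ k p.2)) x : ℂ)‖ ^ 2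
        ≤ B₁ k * B₂ k * ‖x‖ ^ 2 :=
    fun k => P.tensor_bessel (hB₁pos k).le (hB₂pos k).le (hB₁ k) (hB₂ k)
  have hCnn : 0 ≤ (r : ℝ) * ∑ k, B₁ k * B₂ k := by
    apply mul_nonneg (Nat.cast_nonneg r)
    exact Finset.sum_nonneg fun k _ => mul_nonneg (hB₁pos k).le (hB₂pos k).le
  refine ⟨(r : ℝ) * (∑ k, B₁ k * B₂ k) + 1, by linarith, ?_⟩
  intro x
  have hpt : ∀ p : ℕ × ℕ,
      ‖(inner ℂ (∑ k, P.tmul (f₁ k p.1) (f₂ k p.2)) x : ℂ)‖ ^ 2 ≤ (r : ℝ) * ∑ k, ‖(inner ℂ (P.tmul (f₁ k p.1) (f₂ k p.2)) x : ℂ)‖ ^ 2 := by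
    intro p
    rw [sum_inner]
    calc ‖∑ k, (inner ℂ (P.tmul (f₁ k p.1) (f₂ k p.2)) x : ℂ)‖ ^ 2
        ≤ (∑ k, ‖(inner ℂ (P.tmul (f₁ k p.1) (f₂ k p.2)) x : ℂ)‖) ^ 2 := by
          have h1 := norm_sum_le Finset.univ
            (fun k => (inner ℂ (P.tmul (f₁ k p.1) (f₂ k p.2)) x : ℂ))
          exact pow_le_pow_left₀ (norm_nonneg _) h1 2
      _ ≤ (Finset.univ (α := Fin r)).card * ∑ k, ‖(inner ℂ (P.tmul (f₁ k p.1) (f₂ k p.2)) x : ℂ)‖ ^ 2 := by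
          exact sq_sum_le_card_mul_sum_sq
            (s := (Finset.univ : Finset (Fin r)))
            (f := fun k => ‖(inner ℂ (P.tmul (f₁ k p.1) (f₂ k p.2)) x : ℂ)‖)
      _ = (r : ℝ) * ∑ k, ‖(inner ℂ (P.tmul (f₁ k p.1) (f₂ k p.2)) x : ℂ)‖ ^ 2 := by
          rw [Finset.card_univ, Fintype.card_fin]
  have hmaj : Summable (fun p : ℕ × ℕ => (r : ℝ) * ∑ k, ‖(inner ℂ (P.tmul (f₁ k p.1) (f₂ k p.2)) x : ℂ)‖ ^ 2) := by
    exact Summable.mul_left _ (summable_sum fun k _ => (hk k x).1)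
  have hsummable :
      Summable (fun p : ℕ × ℕ => ‖(inner ℂ (∑ k, P.tmul (f₁ k p.1) (f₂ k p.2)) x : ℂ)‖ ^ 2) :=
    Summable.of_nonneg_of_le (fun p => sq_nonneg _) hpt hmaj
  refine ⟨hsummable, ?_⟩
  calc ∑' p : ℕ × ℕ, ‖(inner ℂ (∑ k, P.tmul (f₁ k p.1) (f₂ k p.2)) x : ℂ)‖ ^ 2
      ≤ ∑' p : ℕ × ℕ, (r : ℝ) * ∑ k, ‖(inner ℂ (P.tmul (f₁ k p.1) (f₂ k p.2)) x : ℂ)‖ ^ 2 := Summable.tsum_le_tsum hpt hsummable hmaj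
    _ = (r : ℝ) * ∑' p : ℕ × ℕ, ∑ k, ‖(inner ℂ (P.tmul (f₁ k p.1) (f₂ k p.2)) x : ℂ)‖ ^ 2 := tsum_mul_left
    _ = (r : ℝ) * ∑ k, ∑' p : ℕ × ℕ, ‖(inner ℂ (P.tmul (f₁ k p.1) (f₂ k p.2)) x : ℂ)‖ ^ 2 := by
        rw [Summable.tsum_finsetSum fun k _ => (hk k x).1]
    _ ≤ (r : ℝ) * ∑ k, B₁ k * B₂ k * ‖x‖ ^ 2 := by
        apply mul_le_mul_of_nonneg_left _ (Nat.cast_nonneg r)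
        exact Finset.sum_le_sum fun k _ => (hk k x).2
    _ = ((r : ℝ) * ∑ k, B₁ k * B₂ k) * ‖x‖ ^ 2 := by
        rw [← Finset.sum_mul]; ring
    _ ≤ ((r : ℝ) * (∑ k, B₁ k * B₂ k) + 1) * ‖x‖ ^ 2 := by
        apply mul_le_mul_of_nonneg_right _ (sq_nonneg _)
        linarith
end

section
/- Let {f_{j,1,n}} and {f_{j,2,n}} be two linearly independent sequences in H_j for j = 1, 2. Suppose F = {f_{1,1,m} ⊗ f_{2,1,n} + f_{1,2,m} ⊗ f_{2,2,n}}_{m,n} is a frame for H₁ ⊗ H₂ and suppose {f_{2,2,n}} is not a frame for H₂. Then {f_{1,1,m}} is a frame for H₁. -/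
local notation "⟪" x ", " y "⟫" => (inner ℂ x y : ℂ)

private lemma normsq_add_le (u v : ℂ) : ‖u + v‖ ^ 2 ≤ 2 * ‖u‖ ^ 2 + 2 * ‖v‖ ^ 2 := by
  have h := norm_add_le u v
  have h2 : ‖u + v‖ ^ 2 ≤ (‖u‖ + ‖v‖) ^ 2 := by
    have := pow_le_pow_left₀ (norm_nonneg _) h 2
    simpa using this
  nlinarith [norm_nonneg u, norm_nonneg v, sq_nonneg (‖u‖ - ‖v‖)]

private lemma exists_det_ne_zero {K : Type*} [NormedAddCommGroup K] [InnerProductSpace ℂ K]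
    (g h : ℕ → K) (hind : LinearIndependent ℂ ![g, h]) :
    ∃ (y y' : K) (n n' : ℕ),
      ⟪g n, y⟫ * ⟪h n', y'⟫ - ⟪g n', y'⟫ * ⟪h n, y⟫ ≠ 0 := by
  by_contra hc
  push_neg at hc
  obtain ⟨hne, hns⟩ := linearIndependent_fin2.mp hind
  simp only [Matrix.cons_val_one, Matrix.head_cons, Matrix.cons_val_zero] at hne hns
  have hg : g ≠ 0 := by
    intro hg0
    exact hns 0 (by simp [hg0])
  obtain ⟨n₀, hn₀⟩ : ∃ n, g n ≠ 0 := by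
    by_contra hng; push_neg at hng; exact hg (funext fun n => hng n)
  have ha₀ : ⟪g n₀, g n₀⟫ ≠ 0 := by
    simpa [inner_self_eq_zero] using hn₀
  set c : ℂ := ⟪h n₀, g n₀⟫ / ⟪g n₀, g n₀⟫ with hc_def
  have hkey : ∀ n, h n = (starRingEnd ℂ c) • g n := by
    intro n
    apply ext_inner_right ℂ
    intro v
    have h1 := hc (g n₀) v n₀ n
    have h2 : ⟪h n, v⟫ = c * ⟪g n, v⟫ := by
      rw [hc_def]
      field_simp
      linear_combination h1
    rw [inner_smul_left, h2]
    simp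
  have hhc : h = (starRingEnd ℂ c) • g := funext fun n => by
    simpa using hkey n
  by_cases hc0 : c = 0
  · exact hne (by simp [hhc, hc0])
  · apply hns ((starRingEnd ℂ c)⁻¹)
    rw [hhc, smul_smul, inv_mul_cancel₀ (by simpa using hc0), one_smul]

private lemma bessel_extract {H : Type*} [NormedAddCommGroup H] [InnerProductSpace ℂ H]
    (u v : ℕ → H) (a b a' b' : ℂ) (hd : a * b' - a' * b ≠ 0)
    (C : ℝ) (hC : 0 ≤ C)
    (h1 : ∀ x : H, Summable (fun m => ‖a * ⟪u m, x⟫ + b * ⟪v m, x⟫‖ ^ 2) ∧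
      ∑' m, ‖a * ⟪u m, x⟫ + b * ⟪v m, x⟫‖ ^ 2 ≤ C * ‖x‖ ^ 2)
    (h2 : ∀ x : H, Summable (fun m => ‖a' * ⟪u m, x⟫ + b' * ⟪v m, x⟫‖ ^ 2) ∧
      ∑' m, ‖a' * ⟪u m, x⟫ + b' * ⟪v m, x⟫‖ ^ 2 ≤ C * ‖x‖ ^ 2) :
    IsBessel u := by
  set d : ℂ := a * b' - a' * b with hd_def
  have hdn : 0 < ‖d‖ ^ 2 := by
    exact pow_pos (norm_pos_iff.mpr hd) 2
  have hD0 : (0:ℝ) ≤ (2 * ‖b'‖ ^ 2 * C + 2 * ‖b‖ ^ 2 * C) / ‖d‖ ^ 2 :=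
    div_nonneg (by nlinarith [norm_nonneg b, norm_nonneg b', sq_nonneg ‖b‖, sq_nonneg ‖b'‖]) hdn.le
  refine ⟨(2 * ‖b'‖ ^ 2 * C + 2 * ‖b‖ ^ 2 * C) / ‖d‖ ^ 2 + 1, by linarith, ?_⟩
  intro x
  set p : ℕ → ℂ := fun m => ⟪u m, x⟫ with hp
  set s : ℕ → ℂ := fun m => a * ⟪u m, x⟫ + b * ⟪v m, x⟫ with hs
  set s' : ℕ → ℂ := fun m => a' * ⟪u m, x⟫ + b' * ⟪v m, x⟫ with hs'
  have hbound : ∀ m, ‖p m‖ ^ 2 ≤ (2 * ‖b'‖ ^ 2 * ‖s m‖ ^ 2 + 2 * ‖b‖ ^ 2 * ‖s' m‖ ^ 2) / ‖d‖ ^ 2 := by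
    intro m
    have hdp : d * p m = b' * s m - b * s' m := by
      simp only [hp, hs, hs', hd_def]; ring
    have h3 : ‖d‖ * ‖p m‖ ≤ ‖b'‖ * ‖s m‖ + ‖b‖ * ‖s' m‖ := by
      calc ‖d‖ * ‖p m‖ = ‖d * p m‖ := (norm_mul _ _).symm
        _ = ‖b' * s m - b * s' m‖ := by rw [hdp]
        _ ≤ ‖b' * s m‖ + ‖b * s' m‖ := norm_sub_le _ _
        _ = ‖b'‖ * ‖s m‖ + ‖b‖ * ‖s' m‖ := by rw [norm_mul, norm_mul]
    rw [le_div_iff₀ hdn]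
    nlinarith [norm_nonneg (p m), norm_nonneg (s m), norm_nonneg (s' m), norm_nonneg d,
      norm_nonneg b, norm_nonneg b',
      mul_nonneg (norm_nonneg d) (norm_nonneg (p m)),
      sq_nonneg (‖b'‖ * ‖s m‖ - ‖b‖ * ‖s' m‖)]
  have hsumRHS : Summable (fun m => (2 * ‖b'‖ ^ 2 * ‖s m‖ ^ 2 + 2 * ‖b‖ ^ 2 * ‖s' m‖ ^ 2) / ‖d‖ ^ 2) := by
    apply Summable.div_const
    exact ((h1 x).1.mul_left _).add ((h2 x).1.mul_left _)
  have hsumP : Summable (fun m => ‖p m‖ ^ 2) :=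
    Summable.of_nonneg_of_le (fun m => by positivity) hbound hsumRHS
  refine ⟨hsumP, ?_⟩
  have e1 := (h1 x).2
  have e2 := (h2 x).2
  have t1n : 0 ≤ ∑' m, ‖s m‖ ^ 2 := tsum_nonneg fun m => by positivity
  have t2n : 0 ≤ ∑' m, ‖s' m‖ ^ 2 := tsum_nonneg fun m => by positivity
  calc ∑' m, ‖p m‖ ^ 2
      ≤ ∑' m, (2 * ‖b'‖ ^ 2 * ‖s m‖ ^ 2 + 2 * ‖b‖ ^ 2 * ‖s' m‖ ^ 2) / ‖d‖ ^ 2 :=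
        Summable.tsum_le_tsum hbound hsumP hsumRHS
    _ = (2 * ‖b'‖ ^ 2 * (∑' m, ‖s m‖ ^ 2) + 2 * ‖b‖ ^ 2 * (∑' m, ‖s' m‖ ^ 2)) / ‖d‖ ^ 2 := by
        rw [tsum_div_const, Summable.tsum_add ((h1 x).1.mul_left _) ((h2 x).1.mul_left _),
          tsum_mul_left, tsum_mul_left]
    _ ≤ ((2 * ‖b'‖ ^ 2 * C + 2 * ‖b‖ ^ 2 * C) * ‖x‖ ^ 2) / ‖d‖ ^ 2 := by
        apply (div_le_div_iff_of_pos_right hdn).mpr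
        nlinarith [norm_nonneg b, norm_nonneg b', sq_nonneg ‖x‖]
    _ = ((2 * ‖b'‖ ^ 2 * C + 2 * ‖b‖ ^ 2 * C) / ‖d‖ ^ 2) * ‖x‖ ^ 2 := by ring
    _ ≤ ((2 * ‖b'‖ ^ 2 * C + 2 * ‖b‖ ^ 2 * C) / ‖d‖ ^ 2 + 1) * ‖x‖ ^ 2 := by
        nlinarith [sq_nonneg ‖x‖]

private lemma tsum_prod_mul {f g : ℕ → ℝ} (hf : Summable f) (hg : Summable g)
    (hf' : ∀ i, 0 ≤ f i) (hg' : ∀ i, 0 ≤ g i) :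
    ∑' p : ℕ × ℕ, f p.1 * g p.2 = (∑' i, f i) * ∑' j, g j := by
  have hs : Summable fun p : ℕ × ℕ => f p.1 * g p.2 :=
    hf.mul_of_nonneg hg (fun i => hf' i) (fun i => hg' i)
  have h := Summable.tsum_prod' hs (fun b => hg.mul_left (f b))
  rw [h]
  simp only [tsum_mul_left]
  exact tsum_mul_right

set_option maxHeartbeats 2000000

/-- If {f₁₁ₘ ⊗ f₂₁ₙ + f₁₂ₘ ⊗ f₂₂ₙ} is a frame and {f₂₂ₙ} is not a frame, then {f₁₁ₘ}
is a frame. -/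
theorem frame_component_of_sum_of_two_tensors
    {H₁ H₂ T : Type*}
    [NormedAddCommGroup H₁] [InnerProductSpace ℂ H₁] [CompleteSpace H₁] [TopologicalSpace.SeparableSpace H₁]
    [NormedAddCommGroup H₂] [InnerProductSpace ℂ H₂] [CompleteSpace H₂] [TopologicalSpace.SeparableSpace H₂]
    [NormedAddCommGroup T] [InnerProductSpace ℂ T] [CompleteSpace T] [TopologicalSpace.SeparableSpace T]
    (P : HilbertTensorProduct H₁ H₂ T)
    (f₁₁ f₁₂ : ℕ → H₁) (f₂₁ f₂₂ : ℕ → H₂)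
    (hind₁ : LinearIndependent ℂ ![f₁₁, f₁₂])
    (hind₂ : LinearIndependent ℂ ![f₂₁, f₂₂])
    (hF : IsFrame (fun p : ℕ × ℕ =>
      P.tmul (f₁₁ p.1) (f₂₁ p.2) + P.tmul (f₁₂ p.1) (f₂₂ p.2)))
    (hnot : ¬ IsFrame f₂₂) :
    IsFrame f₁₁ := by
  classical
  obtain ⟨A, B, hA, hB, hfr⟩ := hF
  -- norm of an elementary tensor
  have hnorm : ∀ (x : H₁) (y : H₂), ‖P.tmul x y‖ ^ 2 = ‖x‖ ^ 2 * ‖y‖ ^ 2 := by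
    intro x y
    have h := P.inner_tmul x x y y
    rw [inner_self_eq_norm_sq_to_K, inner_self_eq_norm_sq_to_K, inner_self_eq_norm_sq_to_K] at h
    exact_mod_cast h
  have hin : ∀ (x : H₁) (y : H₂) (p : ℕ × ℕ),
      (inner ℂ (P.tmul (f₁₁ p.1) (f₂₁ p.2) + P.tmul (f₁₂ p.1) (f₂₂ p.2)) (P.tmul x y) : ℂ)
        = ⟪f₁₁ p.1, x⟫ * ⟪f₂₁ p.2, y⟫ + ⟪f₁₂ p.1, x⟫ * ⟪f₂₂ p.2, y⟫ := by
    intro x y p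
    rw [inner_add_left, P.inner_tmul, P.inner_tmul]
  have key : ∀ (x : H₁) (y : H₂),
      Summable (fun p : ℕ × ℕ =>
        ‖⟪f₁₁ p.1, x⟫ * ⟪f₂₁ p.2, y⟫ + ⟪f₁₂ p.1, x⟫ * ⟪f₂₂ p.2, y⟫‖ ^ 2) ∧
      A * (‖x‖ ^ 2 * ‖y‖ ^ 2) ≤
        (∑' p : ℕ × ℕ, ‖⟪f₁₁ p.1, x⟫ * ⟪f₂₁ p.2, y⟫ + ⟪f₁₂ p.1, x⟫ * ⟪f₂₂ p.2, y⟫‖ ^ 2) ∧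
      (∑' p : ℕ × ℕ, ‖⟪f₁₁ p.1, x⟫ * ⟪f₂₁ p.2, y⟫ + ⟪f₁₂ p.1, x⟫ * ⟪f₂₂ p.2, y⟫‖ ^ 2)
        ≤ B * (‖x‖ ^ 2 * ‖y‖ ^ 2) := by
    intro x y
    have h := hfr (P.tmul x y)
    simp only [hin x y, hnorm x y] at h
    exact h
  -- row combinations: fix (y, n), vary m
  have rowC : ∀ (y : H₂) (n : ℕ) (x : H₁),
      Summable (fun m =>
        ‖⟪f₂₁ n, y⟫ * ⟪f₁₁ m, x⟫ + ⟪f₂₂ n, y⟫ * ⟪f₁₂ m, x⟫‖ ^ 2) ∧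
      (∑' m, ‖⟪f₂₁ n, y⟫ * ⟪f₁₁ m, x⟫ + ⟪f₂₂ n, y⟫ * ⟪f₁₂ m, x⟫‖ ^ 2)
        ≤ (B * ‖y‖ ^ 2) * ‖x‖ ^ 2 := by
    intro y n x
    have hinj : Function.Injective (fun m : ℕ => ((m, n) : ℕ × ℕ)) := by
      intro a b hh
      simpa using congrArg Prod.fst hh
    have h := key x y
    have heq : ∀ m : ℕ,
        ‖⟪f₂₁ n, y⟫ * ⟪f₁₁ m, x⟫ + ⟪f₂₂ n, y⟫ * ⟪f₁₂ m, x⟫‖ ^ 2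
          = ((fun p : ℕ × ℕ =>
            ‖⟪f₁₁ p.1, x⟫ * ⟪f₂₁ p.2, y⟫ + ⟪f₁₂ p.1, x⟫ * ⟪f₂₂ p.2, y⟫‖ ^ 2) ∘
            (fun m : ℕ => ((m, n) : ℕ × ℕ))) m := by
      intro m
      simp only [Function.comp_apply]
      rw [mul_comm, mul_comm (⟪f₂₂ n, y⟫)]
    constructor
    · rw [funext heq]
      exact h.1.comp_injective hinj
    · calc (∑' m, ‖⟪f₂₁ n, y⟫ * ⟪f₁₁ m, x⟫ + ⟪f₂₂ n, y⟫ * ⟪f₁₂ m, x⟫‖ ^ 2)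
          = ∑' m, ((fun p : ℕ × ℕ =>
              ‖⟪f₁₁ p.1, x⟫ * ⟪f₂₁ p.2, y⟫ + ⟪f₁₂ p.1, x⟫ * ⟪f₂₂ p.2, y⟫‖ ^ 2) ∘
              (fun m : ℕ => ((m, n) : ℕ × ℕ))) m := tsum_congr heq
        _ ≤ ∑' p : ℕ × ℕ, ‖⟪f₁₁ p.1, x⟫ * ⟪f₂₁ p.2, y⟫ + ⟪f₁₂ p.1, x⟫ * ⟪f₂₂ p.2, y⟫‖ ^ 2 :=
            tsum_comp_le_tsum_of_inj h.1 (fun p => by positivity) hinj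
        _ ≤ B * (‖x‖ ^ 2 * ‖y‖ ^ 2) := h.2.2
        _ = (B * ‖y‖ ^ 2) * ‖x‖ ^ 2 := by ring
  -- column combinations: fix (x, m), vary n
  have colC : ∀ (x : H₁) (m : ℕ) (y : H₂),
      Summable (fun n =>
        ‖⟪f₁₁ m, x⟫ * ⟪f₂₁ n, y⟫ + ⟪f₁₂ m, x⟫ * ⟪f₂₂ n, y⟫‖ ^ 2) ∧
      (∑' n, ‖⟪f₁₁ m, x⟫ * ⟪f₂₁ n, y⟫ + ⟪f₁₂ m, x⟫ * ⟪f₂₂ n, y⟫‖ ^ 2)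
        ≤ (B * ‖x‖ ^ 2) * ‖y‖ ^ 2 := by
    intro x m y
    have hinj : Function.Injective (fun n : ℕ => ((m, n) : ℕ × ℕ)) := by
      intro a b hh
      simpa using congrArg Prod.snd hh
    have h := key x y
    have heq : ∀ n : ℕ,
        ‖⟪f₁₁ m, x⟫ * ⟪f₂₁ n, y⟫ + ⟪f₁₂ m, x⟫ * ⟪f₂₂ n, y⟫‖ ^ 2
          = ((fun p : ℕ × ℕ =>
            ‖⟪f₁₁ p.1, x⟫ * ⟪f₂₁ p.2, y⟫ + ⟪f₁₂ p.1, x⟫ * ⟪f₂₂ p.2, y⟫‖ ^ 2) ∘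
            (fun n : ℕ => ((m, n) : ℕ × ℕ))) n := by
      intro n
      simp only [Function.comp_apply]
    constructor
    · rw [funext heq]
      exact h.1.comp_injective hinj
    · calc (∑' n, ‖⟪f₁₁ m, x⟫ * ⟪f₂₁ n, y⟫ + ⟪f₁₂ m, x⟫ * ⟪f₂₂ n, y⟫‖ ^ 2)
          = ∑' n, ((fun p : ℕ × ℕ =>
              ‖⟪f₁₁ p.1, x⟫ * ⟪f₂₁ p.2, y⟫ + ⟪f₁₂ p.1, x⟫ * ⟪f₂₂ p.2, y⟫‖ ^ 2) ∘
              (fun n : ℕ => ((m, n) : ℕ × ℕ))) n := tsum_congr heq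
        _ ≤ ∑' p : ℕ × ℕ, ‖⟪f₁₁ p.1, x⟫ * ⟪f₂₁ p.2, y⟫ + ⟪f₁₂ p.1, x⟫ * ⟪f₂₂ p.2, y⟫‖ ^ 2 :=
            tsum_comp_le_tsum_of_inj h.1 (fun p => by positivity) hinj
        _ ≤ B * (‖x‖ ^ 2 * ‖y‖ ^ 2) := h.2.2
        _ = (B * ‖x‖ ^ 2) * ‖y‖ ^ 2 := by ring
  -- Bessel property of f₁₁ and f₁₂
  obtain ⟨yr, yr', nr, nr', hdetr⟩ := exists_det_ne_zero f₂₁ f₂₂ hind₂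
  set Cr : ℝ := B * ‖yr‖ ^ 2 + B * ‖yr'‖ ^ 2 with hCr
  have hCr0 : 0 ≤ Cr := by positivity
  have hrow1 : ∀ x : H₁,
      Summable (fun m => ‖⟪f₂₁ nr, yr⟫ * ⟪f₁₁ m, x⟫ + ⟪f₂₂ nr, yr⟫ * ⟪f₁₂ m, x⟫‖ ^ 2) ∧
      (∑' m, ‖⟪f₂₁ nr, yr⟫ * ⟪f₁₁ m, x⟫ + ⟪f₂₂ nr, yr⟫ * ⟪f₁₂ m, x⟫‖ ^ 2) ≤ Cr * ‖x‖ ^ 2 := by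
    intro x
    refine ⟨(rowC yr nr x).1, (rowC yr nr x).2.trans ?_⟩
    have : (B * ‖yr‖ ^ 2) ≤ Cr := by rw [hCr]; nlinarith [sq_nonneg ‖yr'‖]
    nlinarith [sq_nonneg ‖x‖]
  have hrow2 : ∀ x : H₁,
      Summable (fun m => ‖⟪f₂₁ nr', yr'⟫ * ⟪f₁₁ m, x⟫ + ⟪f₂₂ nr', yr'⟫ * ⟪f₁₂ m, x⟫‖ ^ 2) ∧
      (∑' m, ‖⟪f₂₁ nr', yr'⟫ * ⟪f₁₁ m, x⟫ + ⟪f₂₂ nr', yr'⟫ * ⟪f₁₂ m, x⟫‖ ^ 2) ≤ Cr * ‖x‖ ^ 2 := by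
    intro x
    refine ⟨(rowC yr' nr' x).1, (rowC yr' nr' x).2.trans ?_⟩
    have : (B * ‖yr'‖ ^ 2) ≤ Cr := by rw [hCr]; nlinarith [sq_nonneg ‖yr‖]
    nlinarith [sq_nonneg ‖x‖]
  have hB11 : IsBessel f₁₁ :=
    bessel_extract f₁₁ f₁₂ (⟪f₂₁ nr, yr⟫) (⟪f₂₂ nr, yr⟫) (⟪f₂₁ nr', yr'⟫) (⟪f₂₂ nr', yr'⟫)
      hdetr Cr hCr0 hrow1 hrow2
  have hB12 : IsBessel f₁₂ := by
    apply bessel_extract f₁₂ f₁₁ (⟪f₂₂ nr, yr⟫) (⟪f₂₁ nr, yr⟫) (⟪f₂₂ nr', yr'⟫) (⟪f₂₁ nr', yr'⟫)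
      ?_ Cr hCr0 ?_ ?_
    · intro hh; apply hdetr; linear_combination -hh
    · intro x
      have h := hrow1 x
      have heq : (fun m => ‖⟪f₂₂ nr, yr⟫ * ⟪f₁₂ m, x⟫ + ⟪f₂₁ nr, yr⟫ * ⟪f₁₁ m, x⟫‖ ^ 2)
          = (fun m => ‖⟪f₂₁ nr, yr⟫ * ⟪f₁₁ m, x⟫ + ⟪f₂₂ nr, yr⟫ * ⟪f₁₂ m, x⟫‖ ^ 2) :=
        funext fun m => by rw [add_comm]
      rw [heq]; exact h
    · intro x
      have h := hrow2 x
      have heq : (fun m => ‖⟪f₂₂ nr', yr'⟫ * ⟪f₁₂ m, x⟫ + ⟪f₂₁ nr', yr'⟫ * ⟪f₁₁ m, x⟫‖ ^ 2)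
          = (fun m => ‖⟪f₂₁ nr', yr'⟫ * ⟪f₁₁ m, x⟫ + ⟪f₂₂ nr', yr'⟫ * ⟪f₁₂ m, x⟫‖ ^ 2) :=
        funext fun m => by rw [add_comm]
      rw [heq]; exact h
  -- Bessel property of f₂₁ and f₂₂
  obtain ⟨xc, xc', mc, mc', hdetc⟩ := exists_det_ne_zero f₁₁ f₁₂ hind₁
  set Cc : ℝ := B * ‖xc‖ ^ 2 + B * ‖xc'‖ ^ 2 with hCc
  have hCc0 : 0 ≤ Cc := by positivity
  have hcol1 : ∀ y : H₂,
      Summable (fun n => ‖⟪f₁₁ mc, xc⟫ * ⟪f₂₁ n, y⟫ + ⟪f₁₂ mc, xc⟫ * ⟪f₂₂ n, y⟫‖ ^ 2) ∧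
      (∑' n, ‖⟪f₁₁ mc, xc⟫ * ⟪f₂₁ n, y⟫ + ⟪f₁₂ mc, xc⟫ * ⟪f₂₂ n, y⟫‖ ^ 2) ≤ Cc * ‖y‖ ^ 2 := by
    intro y
    refine ⟨(colC xc mc y).1, (colC xc mc y).2.trans ?_⟩
    have : (B * ‖xc‖ ^ 2) ≤ Cc := by rw [hCc]; nlinarith [sq_nonneg ‖xc'‖]
    nlinarith [sq_nonneg ‖y‖]
  have hcol2 : ∀ y : H₂,
      Summable (fun n => ‖⟪f₁₁ mc', xc'⟫ * ⟪f₂₁ n, y⟫ + ⟪f₁₂ mc', xc'⟫ * ⟪f₂₂ n, y⟫‖ ^ 2) ∧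
      (∑' n, ‖⟪f₁₁ mc', xc'⟫ * ⟪f₂₁ n, y⟫ + ⟪f₁₂ mc', xc'⟫ * ⟪f₂₂ n, y⟫‖ ^ 2) ≤ Cc * ‖y‖ ^ 2 := by
    intro y
    refine ⟨(colC xc' mc' y).1, (colC xc' mc' y).2.trans ?_⟩
    have : (B * ‖xc'‖ ^ 2) ≤ Cc := by rw [hCc]; nlinarith [sq_nonneg ‖xc‖]
    nlinarith [sq_nonneg ‖y‖]
  have hB21 : IsBessel f₂₁ :=
    bessel_extract f₂₁ f₂₂ (⟪f₁₁ mc, xc⟫) (⟪f₁₂ mc, xc⟫) (⟪f₁₁ mc', xc'⟫) (⟪f₁₂ mc', xc'⟫)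
      hdetc Cc hCc0 hcol1 hcol2
  have hB22 : IsBessel f₂₂ := by
    apply bessel_extract f₂₂ f₂₁ (⟪f₁₂ mc, xc⟫) (⟪f₁₁ mc, xc⟫) (⟪f₁₂ mc', xc'⟫) (⟪f₁₁ mc', xc'⟫)
      ?_ Cc hCc0 ?_ ?_
    · intro hh; apply hdetc; linear_combination -hh
    · intro y
      have h := hcol1 y
      have heq : (fun n => ‖⟪f₁₂ mc, xc⟫ * ⟪f₂₂ n, y⟫ + ⟪f₁₁ mc, xc⟫ * ⟪f₂₁ n, y⟫‖ ^ 2)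
          = (fun n => ‖⟪f₁₁ mc, xc⟫ * ⟪f₂₁ n, y⟫ + ⟪f₁₂ mc, xc⟫ * ⟪f₂₂ n, y⟫‖ ^ 2) :=
        funext fun n => by rw [add_comm]
      rw [heq]; exact h
    · intro y
      have h := hcol2 y
      have heq : (fun n => ‖⟪f₁₂ mc', xc'⟫ * ⟪f₂₂ n, y⟫ + ⟪f₁₁ mc', xc'⟫ * ⟪f₂₁ n, y⟫‖ ^ 2)
          = (fun n => ‖⟪f₁₁ mc', xc'⟫ * ⟪f₂₁ n, y⟫ + ⟪f₁₂ mc', xc'⟫ * ⟪f₂₂ n, y⟫‖ ^ 2) :=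
        funext fun n => by rw [add_comm]
      rw [heq]; exact h
  obtain ⟨B11, hB11p, h11⟩ := hB11
  obtain ⟨B12, hB12p, h12⟩ := hB12
  obtain ⟨B21, hB21p, h21⟩ := hB21
  obtain ⟨B22, hB22p, h22⟩ := hB22
  -- f₂₂ is Bessel but not a frame, so its lower bound fails
  have hlow : ∀ ε : ℝ, 0 < ε → ∃ y : H₂, (∑' n, ‖⟪f₂₂ n, y⟫‖ ^ 2) < ε * ‖y‖ ^ 2 := by
    intro ε hε
    by_contra hcon
    push_neg at hcon
    exact hnot ⟨ε, B22, hε, hB22p, fun y => ⟨(h22 y).1, hcon y, (h22 y).2⟩⟩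
  obtain ⟨y₁, hy₁⟩ := hlow (A / (4 * B12)) (by positivity)
  have hS22n : 0 ≤ ∑' n, ‖⟪f₂₂ n, y₁⟫‖ ^ 2 := tsum_nonneg fun n => by positivity
  have hε : 0 < A / (4 * B12) := by positivity
  have hy₁n : 0 < ‖y₁‖ ^ 2 := by
    rcases lt_or_ge 0 (‖y₁‖ ^ 2) with h | h
    · exact h
    · exfalso; nlinarith [mul_nonneg hε.le (neg_nonneg.mpr h)]
  -- final frame bounds
  refine ⟨A / (4 * B21), B11, by positivity, hB11p, fun x => ⟨(h11 x).1, ?_, (h11 x).2⟩⟩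
  -- abbreviations
  set Sx : ℝ := ∑' m, ‖⟪f₁₁ m, x⟫‖ ^ 2 with hSx
  set Tx : ℝ := ∑' m, ‖⟪f₁₂ m, x⟫‖ ^ 2 with hTx
  set S21 : ℝ := ∑' n, ‖⟪f₂₁ n, y₁⟫‖ ^ 2 with hS21
  set S22 : ℝ := ∑' n, ‖⟪f₂₂ n, y₁⟫‖ ^ 2 with hS22d
  have hSxs := (h11 x).1
  have hTxs := (h12 x).1
  have hS21s := (h21 y₁).1
  have hS22s := (h22 y₁).1
  have hsum1 : Summable (fun p : ℕ × ℕ => ‖⟪f₁₁ p.1, x⟫‖ ^ 2 * ‖⟪f₂₁ p.2, y₁⟫‖ ^ 2) :=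
    hSxs.mul_of_nonneg hS21s (fun m => by positivity) (fun n => by positivity)
  have hsum2 : Summable (fun p : ℕ × ℕ => ‖⟪f₁₂ p.1, x⟫‖ ^ 2 * ‖⟪f₂₂ p.2, y₁⟫‖ ^ 2) :=
    hTxs.mul_of_nonneg hS22s (fun m => by positivity) (fun n => by positivity)
  have hptw : ∀ p : ℕ × ℕ,
      ‖⟪f₁₁ p.1, x⟫ * ⟪f₂₁ p.2, y₁⟫ + ⟪f₁₂ p.1, x⟫ * ⟪f₂₂ p.2, y₁⟫‖ ^ 2
        ≤ 2 * (‖⟪f₁₁ p.1, x⟫‖ ^ 2 * ‖⟪f₂₁ p.2, y₁⟫‖ ^ 2)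
          + 2 * (‖⟪f₁₂ p.1, x⟫‖ ^ 2 * ‖⟪f₂₂ p.2, y₁⟫‖ ^ 2) := by
    intro p
    have h := normsq_add_le (⟪f₁₁ p.1, x⟫ * ⟪f₂₁ p.2, y₁⟫) (⟪f₁₂ p.1, x⟫ * ⟪f₂₂ p.2, y₁⟫)
    simpa [norm_mul, mul_pow] using h
  have hsplit : A * (‖x‖ ^ 2 * ‖y₁‖ ^ 2) ≤ 2 * (Sx * S21) + 2 * (Tx * S22) := by
    have h0 := (key x y₁).2.1
    have h1 : (∑' p : ℕ × ℕ, ‖⟪f₁₁ p.1, x⟫ * ⟪f₂₁ p.2, y₁⟫ + ⟪f₁₂ p.1, x⟫ * ⟪f₂₂ p.2, y₁⟫‖ ^ 2)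
        ≤ ∑' p : ℕ × ℕ, (2 * (‖⟪f₁₁ p.1, x⟫‖ ^ 2 * ‖⟪f₂₁ p.2, y₁⟫‖ ^ 2)
          + 2 * (‖⟪f₁₂ p.1, x⟫‖ ^ 2 * ‖⟪f₂₂ p.2, y₁⟫‖ ^ 2)) :=
      Summable.tsum_le_tsum hptw (key x y₁).1 ((hsum1.mul_left 2).add (hsum2.mul_left 2))
    have h2 : (∑' p : ℕ × ℕ, (2 * (‖⟪f₁₁ p.1, x⟫‖ ^ 2 * ‖⟪f₂₁ p.2, y₁⟫‖ ^ 2)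
          + 2 * (‖⟪f₁₂ p.1, x⟫‖ ^ 2 * ‖⟪f₂₂ p.2, y₁⟫‖ ^ 2)))
        = 2 * (Sx * S21) + 2 * (Tx * S22) := by
      rw [Summable.tsum_add (hsum1.mul_left 2) (hsum2.mul_left 2), tsum_mul_left, tsum_mul_left,
        tsum_prod_mul hSxs hS21s (fun m => by positivity) (fun n => by positivity),
        tsum_prod_mul hTxs hS22s (fun m => by positivity) (fun n => by positivity)]
    linarith
  have hTxb := (h12 x).2
  have hS21b := (h21 y₁).2
  have hSxn : 0 ≤ Sx := tsum_nonneg fun m => by positivity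
  have hTxn : 0 ≤ Tx := tsum_nonneg fun m => by positivity
  have hS21n : 0 ≤ S21 := tsum_nonneg fun n => by positivity
  -- combine everything
  have hstep : A * (‖x‖ ^ 2 * ‖y₁‖ ^ 2)
      ≤ 2 * (Sx * (B21 * ‖y₁‖ ^ 2)) + 2 * ((B12 * ‖x‖ ^ 2) * (A / (4 * B12) * ‖y₁‖ ^ 2)) := by
    have e1 : Sx * S21 ≤ Sx * (B21 * ‖y₁‖ ^ 2) := by nlinarith
    have e2 : Tx * S22 ≤ (B12 * ‖x‖ ^ 2) * (A / (4 * B12) * ‖y₁‖ ^ 2) := by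
      have hS22lt : S22 ≤ A / (4 * B12) * ‖y₁‖ ^ 2 := le_of_lt hy₁
      have hTxb' : Tx ≤ B12 * ‖x‖ ^ 2 := hTxb
      have h1 : 0 ≤ A / (4 * B12) * ‖y₁‖ ^ 2 := by positivity
      nlinarith [sq_nonneg ‖x‖]
    linarith
  have hsimp : 2 * ((B12 * ‖x‖ ^ 2) * (A / (4 * B12) * ‖y₁‖ ^ 2))
      = (A / 2) * (‖x‖ ^ 2 * ‖y₁‖ ^ 2) := by
    field_simp
    ring
  have hstep2 : (A / 2) * ‖x‖ ^ 2 * ‖y₁‖ ^ 2 ≤ (2 * (B21 * Sx)) * ‖y₁‖ ^ 2 := by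
    rw [hsimp] at hstep
    nlinarith
  have hstep3 : (A / 2) * ‖x‖ ^ 2 ≤ 2 * (B21 * Sx) :=
    le_of_mul_le_mul_right (by nlinarith [hstep2]) hy₁n
  calc A / (4 * B21) * ‖x‖ ^ 2 ≤ Sx := by
        rw [div_mul_eq_mul_div, div_le_iff₀ (by positivity : (0:ℝ) < 4 * B21)]
        nlinarith [hstep3]
    _ = ∑' m, ‖⟪f₁₁ m, x⟫‖ ^ 2 := hSx
end

section
/- Let g ∈ L²(ℝ) be nonzero, let a, b > 0, and let u, v be positive integers. If the Gabor system G(g, a, b) = {M_{nb} T_{ma} g : m, n ∈ ℤ} is a frame for L²(ℝ) with frame bounds A and B, then the Gabor system G(g, a/u, b/v) is a frame with frame bounds uvA and uvB. -/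
open MeasureTheory

/-- The Gabor coefficient ⟨f, M_{nb} T_{ma} g⟩ in L²(ℝ). -/
noncomputable def gaborCoef (g : ℝ → ℂ) (a b : ℝ) (f : ℝ → ℂ) (m n : ℤ) : ℂ :=
  ∫ x : ℝ, f x * (starRingEnd ℂ)
    (Complex.exp (((2 * Real.pi * (n : ℝ) * b * x : ℝ) : ℂ) * Complex.I) * g (x - m * a))

/-- The Gabor system G(g, a, b) is a frame for L²(ℝ) with frame bounds A and B. -/
def GaborFrameBounds (g : ℝ → ℂ) (a b A B : ℝ) : Prop :=
  ∀ f : ℝ → ℂ, MemLp f 2 volume →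
    Summable (fun p : ℤ × ℤ => ‖gaborCoef g a b f p.1 p.2‖ ^ 2) ∧
    A * (∫ x : ℝ, ‖f x‖ ^ 2) ≤ ∑' p : ℤ × ℤ, ‖gaborCoef g a b f p.1 p.2‖ ^ 2 ∧
    ∑' p : ℤ × ℤ, ‖gaborCoef g a b f p.1 p.2‖ ^ 2 ≤ B * ∫ x : ℝ, ‖f x‖ ^ 2

/-- Division-with-remainder equivalence `Fin u × ℤ ≃ ℤ`. -/
def divModEquiv (u : ℕ) (hu : 0 < u) : (Fin u × ℤ) ≃ ℤ where
  toFun p := p.2 * u + p.1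
  invFun m := (⟨(m % u).toNat, by
      have h1 : (0:ℤ) < u := by exact_mod_cast hu
      have h2 := Int.emod_lt_of_pos m h1
      have h0 := Int.emod_nonneg m h1.ne'
      omega⟩, m / u)
  left_inv := by
    rintro ⟨⟨r, hr⟩, q⟩
    have h1 : (0:ℤ) < u := by exact_mod_cast hu
    have hr' : (r:ℤ) < u := by exact_mod_cast hr
    have hr0 : (0:ℤ) ≤ r := Int.ofNat_nonneg r
    have hmod : (q * (u:ℤ) + r) % u = r := by
      rw [add_comm, Int.add_mul_emod_self_right, Int.emod_eq_of_lt hr0 hr']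
    have hdiv : (q * (u:ℤ) + r) / u = q := by
      rw [add_comm, Int.add_mul_ediv_right _ _ h1.ne', Int.ediv_eq_zero_of_lt hr0 hr']
      ring
    simp only [hmod, hdiv]
    ext <;> simp
  right_inv := by
    intro m
    have h1 : (0:ℤ) < u := by exact_mod_cast hu
    have h0 := Int.emod_nonneg m h1.ne'
    simp only
    rw [Int.toNat_of_nonneg h0, mul_comm]
    exact Int.mul_ediv_add_emod m u

/-- Translation by `c` and modulation by `-d` of `f`. -/
noncomputable def shiftMod (f : ℝ → ℂ) (c d : ℝ) : ℝ → ℂ :=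
  fun y => Complex.exp (((-(2 * Real.pi * d * y) : ℝ) : ℂ) * Complex.I) * f (y + c)

lemma conj_exp_I (θ : ℝ) : (starRingEnd ℂ) (Complex.exp ((θ:ℂ) * Complex.I)) =
    Complex.exp (((-θ : ℝ):ℂ) * Complex.I) := by
  rw [← Complex.exp_conj]
  congr 1
  simp

lemma exp_I_mul (θ₁ θ₂ : ℝ) : Complex.exp ((θ₁:ℂ) * Complex.I) * Complex.exp ((θ₂:ℂ) * Complex.I)
    = Complex.exp (((θ₁ + θ₂ : ℝ):ℂ) * Complex.I) := by
  rw [← Complex.exp_add]; push_cast; ring_nf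

lemma norm_exp_I_one (θ : ℝ) : ‖Complex.exp ((θ:ℂ) * Complex.I)‖ = 1 := by
  simp [Complex.norm_exp]

lemma coef_shift (g f : ℝ → ℂ) (a b : ℝ) (u v : ℕ) (hu : 0 < u) (hv : 0 < v)
    (r s : ℕ) (q p : ℤ) :
    gaborCoef g (a/u) (b/v) f (q*u + r) (p*v + s)
      = Complex.exp (((-(2*Real.pi*((p*v+s : ℤ) : ℝ)*(b/v)*((r:ℝ)*(a/u))) : ℝ):ℂ) * Complex.I) *
        gaborCoef g a b (shiftMod f ((r:ℝ)*(a/u)) ((s:ℝ)*(b/v))) q p := by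
  have hu' : (u:ℝ) ≠ 0 := Nat.cast_ne_zero.mpr hu.ne'
  have hv' : (v:ℝ) ≠ 0 := Nat.cast_ne_zero.mpr hv.ne'
  have h1 : ((q*u + r : ℤ) : ℝ) * (a/u) = q*a + (r:ℝ)*(a/u) := by push_cast; field_simp
  have h2 : ((p*v + s : ℤ) : ℝ) * (b/v) = (p:ℝ)*b + (s:ℝ)*(b/v) := by push_cast; field_simp
  set c : ℝ := (r:ℝ)*(a/u) with hc
  set d : ℝ := (s:ℝ)*(b/v) with hd
  unfold gaborCoef shiftMod
  rw [← integral_add_right_eq_self _ c, ← integral_const_mul]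
  congr 1; ext y
  have harg : y + c - ((q*u + r : ℤ) : ℝ) * (a/u) = y - q*a := by rw [h1]; ring
  have hexp : 2*Real.pi*((p*v + s : ℤ) : ℝ)*(b/v)*(y+c)
      = (2*Real.pi*(p:ℝ)*b*y) + (2*Real.pi*d*y) + (2*Real.pi*((p*v+s : ℤ):ℝ)*(b/v)*c) := by
    have h3 : 2*Real.pi*((p*v + s : ℤ) : ℝ)*(b/v) = 2*Real.pi*((p:ℝ)*b + d) := by
      rw [show (2*Real.pi*((p*v+s : ℤ):ℝ)*(b/v) : ℝ)
          = 2*Real.pi*(((p*v+s : ℤ):ℝ)*(b/v)) from by ring, h2]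
    rw [h3]; ring
  rw [harg, hexp, map_mul, conj_exp_I, map_mul, conj_exp_I]
  rw [show (-(2*Real.pi*(p:ℝ)*b*y + 2*Real.pi*d*y + 2*Real.pi*((p*v+s : ℤ):ℝ)*(b/v)*c) : ℝ)
      = (-(2*Real.pi*((p*v+s : ℤ):ℝ)*(b/v)*c)) + ((-(2*Real.pi*d*y)) + (-(2*Real.pi*(p:ℝ)*b*y))) from by ring,
    ← exp_I_mul, ← exp_I_mul]
  ring

lemma shiftMod_memLp (f : ℝ → ℂ) (c d : ℝ) (hf : MemLp f 2 volume) :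
    MemLp (shiftMod f c d) 2 volume := by
  have h1 : MemLp (fun y => f (y + c)) 2 volume :=
    hf.comp_measurePreserving (measurePreserving_add_right volume c)
  refine MemLp.of_le h1 ?_ ?_
  · exact (Continuous.aestronglyMeasurable (by continuity)).mul h1.aestronglyMeasurable
  · refine Filter.Eventually.of_forall fun y => ?_
    simp [shiftMod, Complex.norm_exp]

lemma shiftMod_norm (f : ℝ → ℂ) (c d y : ℝ) : ‖shiftMod f c d y‖ = ‖f (y + c)‖ := by
  simp [shiftMod, Complex.norm_exp]

lemma shiftMod_integral (f : ℝ → ℂ) (c d : ℝ) :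
    ∫ y : ℝ, ‖shiftMod f c d y‖ ^ 2 = ∫ x : ℝ, ‖f x‖ ^ 2 := by
  simp only [shiftMod_norm]
  exact integral_add_right_eq_self (fun x => ‖f x‖ ^ 2) c

/-- Oversampling a Gabor frame: if G(g, a, b) is a frame with bounds A, B then
G(g, a/u, b/v) is a frame with bounds uvA, uvB. -/
theorem gabor_frame_oversampling
    (g : ℝ → ℂ) (hg : MemLp g 2 volume) (hgne : ¬ g =ᵐ[volume] 0)
    (a b A B : ℝ) (ha : 0 < a) (hb : 0 < b) (hA : 0 < A) (hB : 0 < B)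
    (u v : ℕ) (hu : 0 < u) (hv : 0 < v)
    (h : GaborFrameBounds g a b A B) :
    GaborFrameBounds g (a / u) (b / v) ((u * v : ℕ) * A) ((u * v : ℕ) * B) := by
  intro f hf
  set I : ℝ := ∫ x : ℝ, ‖f x‖ ^ 2 with hI
  -- the shifted functions
  set fs : Fin u × Fin v → ℝ → ℂ :=
    fun rs => shiftMod f ((rs.1 : ℝ)*(a/u)) ((rs.2 : ℝ)*(b/v)) with hfs
  have hfsmem : ∀ rs, MemLp (fs rs) 2 volume := fun rs =>
    shiftMod_memLp f _ _ hf
  have hfsint : ∀ rs, (∫ y : ℝ, ‖fs rs y‖ ^ 2) = I := fun rs => shiftMod_integral f _ _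
  have hh := fun rs => h (fs rs) (hfsmem rs)
  -- the reindexing equivalence
  set E : (Fin u × Fin v) × (ℤ × ℤ) ≃ ℤ × ℤ :=
    (Equiv.prodProdProdComm (Fin u) (Fin v) ℤ ℤ).trans
      ((divModEquiv u hu).prodCongr (divModEquiv v hv)) with hE
  set F : ℤ × ℤ → ℝ := fun p => ‖gaborCoef g (a/u) (b/v) f p.1 p.2‖ ^ 2 with hF
  have hFE : (fun x : (Fin u × Fin v) × (ℤ × ℤ) => F (E x))
      = fun x => ‖gaborCoef g a b (fs x.1) x.2.1 x.2.2‖ ^ 2 := by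
    funext x
    obtain ⟨⟨r, s⟩, q, p⟩ := x
    have hEx : E ((r, s), (q, p)) = (q * u + (r : ℕ), p * v + (s : ℕ)) := by
      simp [hE, divModEquiv, Equiv.prodProdProdComm]
    rw [hEx]
    simp only [hF]
    rw [coef_shift g f a b u v hu hv r s q p, norm_mul, norm_exp_I_one, one_mul]
  have hFnonneg : 0 ≤ fun x : (Fin u × Fin v) × (ℤ × ℤ) => F (E x) := by
    intro x; positivity
  have hslice : ∀ rs : Fin u × Fin v,
      Summable (fun qp : ℤ × ℤ => F (E (rs, qp))) := by
    intro rs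
    have := (hh rs).1
    have heq : (fun qp : ℤ × ℤ => F (E (rs, qp)))
        = fun qp : ℤ × ℤ => ‖gaborCoef g a b (fs rs) qp.1 qp.2‖ ^ 2 := by
      funext qp; exact congrFun hFE (rs, qp)
    rw [heq]; exact this
  have hsumFE : Summable (fun x : (Fin u × Fin v) × (ℤ × ℤ) => F (E x)) := by
    rw [summable_prod_of_nonneg hFnonneg]
    exact ⟨hslice, Summable.of_finite⟩
  have hsumF : Summable F := E.summable_iff.mp hsumFE
  refine ⟨hsumF, ?_, ?_⟩ <;>
  · have htsum : ∑' p : ℤ × ℤ, F p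
        = ∑ rs : Fin u × Fin v, ∑' qp : ℤ × ℤ, ‖gaborCoef g a b (fs rs) qp.1 qp.2‖ ^ 2 := by
      rw [← E.tsum_eq F, Summable.tsum_prod' hsumFE hslice, tsum_fintype]
      refine Finset.sum_congr rfl fun rs _ => ?_
      refine tsum_congr fun qp => ?_
      exact congrFun hFE (rs, qp)
    have hcard : (Finset.univ : Finset (Fin u × Fin v)).card = u * v := by
      simp
    first
    | -- lower bound
      calc ((u*v : ℕ) : ℝ) * A * I
            = (Finset.univ : Finset (Fin u × Fin v)).card • (A * I) := by
              rw [hcard, nsmul_eq_mul]; push_cast; ring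
        _ ≤ ∑ rs : Fin u × Fin v, ∑' qp : ℤ × ℤ, ‖gaborCoef g a b (fs rs) qp.1 qp.2‖ ^ 2 := by
              refine Finset.card_nsmul_le_sum _ _ _ fun rs _ => ?_
              have := (hh rs).2.1
              rwa [hfsint rs] at this
        _ = ∑' p : ℤ × ℤ, F p := htsum.symm
    | -- upper bound
      calc ∑' p : ℤ × ℤ, F p
            = ∑ rs : Fin u × Fin v, ∑' qp : ℤ × ℤ, ‖gaborCoef g a b (fs rs) qp.1 qp.2‖ ^ 2 :=
              htsum
        _ ≤ (Finset.univ : Finset (Fin u × Fin v)).card • (B * I) := by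
              refine Finset.sum_le_card_nsmul _ _ _ fun rs _ => ?_
              have := (hh rs).2.2
              rwa [hfsint rs] at this
        _ = ((u*v : ℕ) : ℝ) * B * I := by
              rw [hcard, nsmul_eq_mul]; push_cast; ring
end

section
/- Let g ∈ L²(ℝ) be nonzero and a, b > 0. If the Gabor system G(g, a, b) is a Bessel sequence, then G(g, a', b') is a Bessel sequence for all a', b' > 0 of the form a' = a·q₁ and b' = b·q₂ with q₁, q₂ positive rational numbers. -/
open MeasureTheory

/-- The Gabor system G(g, a, b) is a Bessel sequence in L²(ℝ). -/
def GaborBessel (g : ℝ → ℂ) (a b : ℝ) : Prop :=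
  ∃ B : ℝ, 0 < B ∧ ∀ f : ℝ → ℂ, MemLp f 2 volume →
    Summable (fun p : ℤ × ℤ => ‖gaborCoef g a b f p.1 p.2‖ ^ 2) ∧
    ∑' p : ℤ × ℤ, ‖gaborCoef g a b f p.1 p.2‖ ^ 2 ≤ B * ∫ x : ℝ, ‖f x‖ ^ 2

/-! ### Auxiliary machinery -/

/-- The modulation character `e^{2πi t x}`. -/
noncomputable def mexp (t x : ℝ) : ℂ :=
  Complex.exp (((2 * Real.pi * t * x : ℝ) : ℂ) * Complex.I)

lemma mexp_abs (t x : ℝ) : ‖mexp t x‖ = 1 := by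
  simp [mexp, Complex.norm_exp]

lemma mexp_norm (t x : ℝ) : ‖mexp t x‖ = 1 := mexp_abs t x

lemma mexp_add_t (t t' x : ℝ) : mexp (t + t') x = mexp t x * mexp t' x := by
  rw [mexp, mexp, mexp, ← Complex.exp_add]
  congr 1
  rw [← add_mul]
  congr 1
  push_cast
  ring

lemma mexp_add_x (t x c : ℝ) : mexp t (x + c) = mexp t x * mexp t c := by
  rw [mexp, mexp, mexp, ← Complex.exp_add]
  congr 1
  rw [← add_mul]
  congr 1
  push_cast
  ring

lemma mexp_continuous (t : ℝ) : Continuous fun x => mexp t x := by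
  unfold mexp
  fun_prop

lemma gaborCoef_eq (g : ℝ → ℂ) (a b : ℝ) (f : ℝ → ℂ) (m n : ℤ) :
    gaborCoef g a b f m n = ∫ x : ℝ, f x * (starRingEnd ℂ) (mexp ((n : ℝ) * b) x * g (x - m * a)) := by
  unfold gaborCoef mexp
  congr 1
  funext x
  congr 3
  push_cast
  ring

/-- `ℤ ≃ Fin s × ℤ` by division with remainder. -/
def zEquiv (s : ℕ) (hs : 0 < s) : Fin s × ℤ ≃ ℤ where
  toFun p := (s : ℤ) * p.2 + (p.1 : ℤ)
  invFun m := (⟨(m % (s : ℤ)).toNat, by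
      have h0 : (0 : ℤ) < (s : ℤ) := by exact_mod_cast hs
      have h1 := Int.emod_lt_of_pos m h0
      have h2 := Int.emod_nonneg m (ne_of_gt h0)
      omega⟩, m / (s : ℤ))
  left_inv := by
    rintro ⟨j, m⟩
    have h0 : (0 : ℤ) < (s : ℤ) := by exact_mod_cast hs
    have hj1 : (j : ℤ) < (s : ℤ) := by exact_mod_cast j.2
    have hj0 : (0 : ℤ) ≤ (j : ℤ) := Int.ofNat_nonneg _
    have hcomm : (s : ℤ) * m + (j : ℤ) = (j : ℤ) + (s : ℤ) * m := by ring
    have hmod : ((s : ℤ) * m + (j : ℤ)) % (s : ℤ) = (j : ℤ) := by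
      rw [hcomm, Int.add_mul_emod_self_left, Int.emod_eq_of_lt hj0 hj1]
    have hdiv : ((s : ℤ) * m + (j : ℤ)) / (s : ℤ) = m := by
      rw [hcomm, Int.add_mul_ediv_left _ _ (ne_of_gt h0), Int.ediv_eq_zero_of_lt hj0 hj1,
        zero_add]
    refine Prod.ext ?_ ?_
    · apply Fin.ext
      simp only [hmod]
      exact_mod_cast rfl
    · exact hdiv
  right_inv := by
    intro m
    have h0 : (0 : ℤ) < (s : ℤ) := by exact_mod_cast hs
    have h2 := Int.emod_nonneg m (ne_of_gt h0)
    simp only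
    rw [Int.toNat_of_nonneg h2]
    exact Int.mul_ediv_add_emod m s

/-- Coefficients of the subsampled system. -/
lemma gaborCoef_mul (g f : ℝ → ℂ) (α β : ℝ) (r u m n : ℤ) :
    gaborCoef g (α * r) (β * u) f m n = gaborCoef g α β f (r * m) (u * n) := by
  unfold gaborCoef
  congr 1
  funext x
  have h1 : ((r * m : ℤ) : ℝ) * α = (m : ℝ) * (α * (r : ℝ)) := by push_cast; ring
  have h2 : (2 * Real.pi * ((u * n : ℤ) : ℝ) * β * x) = 2 * Real.pi * (n : ℝ) * (β * (u : ℝ)) * x := by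
    push_cast; ring
  rw [h1, h2]

/-- The translated-modulated companion function. -/
noncomputable def tmf (f : ℝ → ℂ) (c t : ℝ) : ℝ → ℂ :=
  fun y => f (y + c) * (starRingEnd ℂ) (mexp t y)

lemma tmf_norm (f : ℝ → ℂ) (c t y : ℝ) : ‖tmf f c t y‖ = ‖f (y + c)‖ := by
  rw [tmf, norm_mul]
  simp [mexp_abs]

lemma tmf_memLp (f : ℝ → ℂ) (hf : MemLp f 2 volume) (c t : ℝ) :
    MemLp (tmf f c t) 2 volume := by
  have hmp : MeasurePreserving (fun y : ℝ => y + c) volume volume :=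
    measurePreserving_add_right volume c
  have hft : MemLp (fun y : ℝ => f (y + c)) 2 volume := hf.comp_measurePreserving hmp
  refine MemLp.of_le hft ?_ ?_
  · exact hft.aestronglyMeasurable.mul
      (((Complex.continuous_conj).comp (mexp_continuous t)).aestronglyMeasurable)
  · exact Filter.Eventually.of_forall fun y => le_of_eq (tmf_norm f c t y)

lemma tmf_integral_sq (f : ℝ → ℂ) (c t : ℝ) :
    ∫ y : ℝ, ‖tmf f c t y‖ ^ 2 = ∫ x : ℝ, ‖f x‖ ^ 2 := by
  have h1 : (fun y : ℝ => ‖tmf f c t y‖ ^ 2) = fun y => ‖f (y + c)‖ ^ 2 := by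
    funext y; rw [tmf_norm]
  rw [h1]
  exact integral_add_right_eq_self (fun x => ‖f x‖ ^ 2) c

/-- Key identity: a coefficient of the oversampled system equals a coefficient of the
original system applied to a translated and modulated function, in norm. -/
lemma gaborCoef_shift (g f : ℝ → ℂ) (a b : ℝ) (s v : ℕ) (hs : 0 < s) (hv : 0 < v)
    (j k m n : ℤ) :
    ‖gaborCoef g (a / s) (b / v) f ((s : ℤ) * m + j) ((v : ℤ) * n + k)‖ =
    ‖gaborCoef g a b (tmf f ((j : ℝ) * (a / s)) ((k : ℝ) * (b / v))) m n‖ := by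
  have hs0 : (s : ℝ) ≠ 0 := by positivity
  have hv0 : (v : ℝ) ≠ 0 := by positivity
  set α := a / s with hα
  set β := b / v with hβ
  set c := (j : ℝ) * α with hc
  set T := (((v : ℤ) * n + k : ℤ) : ℝ) * β with hT
  rw [gaborCoef_eq, gaborCoef_eq]
  have key : (∫ x : ℝ, f x * (starRingEnd ℂ)
      (mexp ((((v : ℤ) * n + k : ℤ) : ℝ) * β) x * g (x - (((s : ℤ) * m + j : ℤ) : ℝ) * α)))
      = (starRingEnd ℂ) (mexp T c) *
        ∫ x : ℝ, tmf f c ((k : ℝ) * β) x * (starRingEnd ℂ) (mexp ((n : ℝ) * b) x * g (x - (m : ℝ) * a)) := by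
    rw [← integral_add_right_eq_self (fun x : ℝ => f x * (starRingEnd ℂ)
      (mexp ((((v : ℤ) * n + k : ℤ) : ℝ) * β) x * g (x - (((s : ℤ) * m + j : ℤ) : ℝ) * α))) c]
    rw [← integral_const_mul]
    congr 1
    funext x
    have harg : x + c - (((s : ℤ) * m + j : ℤ) : ℝ) * α = x - (m : ℝ) * a := by
      have hsa : (s : ℝ) * α = a := by rw [hα]; field_simp
      rw [hc]
      push_cast
      linear_combination (-(m : ℝ)) * hsa
    have hTsplit : (((v : ℤ) * n + k : ℤ) : ℝ) * β = (n : ℝ) * b + (k : ℝ) * β := by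
      have hvb : (v : ℝ) * β = b := by rw [hβ]; field_simp
      push_cast
      linear_combination (n : ℝ) * hvb
    have hT2 : T = (n : ℝ) * b + (k : ℝ) * β := hT.trans hTsplit
    rw [harg, mexp_add_x, hTsplit, mexp_add_t, hT2, tmf]
    simp only [map_mul]
    ring
  rw [key, norm_mul]
  have : ‖(starRingEnd ℂ) (mexp T c)‖ = 1 := by
    rw [RCLike.norm_conj]; exact mexp_norm T c
  rw [this, one_mul]

/-- Oversampling: Bessel at `(a, b)` gives Bessel at `(a/s, b/v)`. -/
lemma gaborBessel_div (g : ℝ → ℂ) (a b : ℝ) (hBes : GaborBessel g a b)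
    (s v : ℕ) (hs : 0 < s) (hv : 0 < v) : GaborBessel g (a / s) (b / v) := by
  obtain ⟨B, hB, hBd⟩ := hBes
  refine ⟨(s : ℝ) * v * B, by positivity, fun f hf => ?_⟩
  -- companion functions
  set F : ℤ × ℤ → ℝ := fun p => ‖gaborCoef g (a / s) (b / v) f p.1 p.2‖ ^ 2 with hF
  set h : Fin s × Fin v → ℝ → ℂ :=
    fun jk => tmf f (((jk.1 : ℤ) : ℝ) * (a / s)) (((jk.2 : ℤ) : ℝ) * (b / v)) with hh
  have hmem : ∀ jk, MemLp (h jk) 2 volume := fun jk => tmf_memLp f hf _ _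
  have hint : ∀ jk, ∫ y : ℝ, ‖h jk y‖ ^ 2 = ∫ x : ℝ, ‖f x‖ ^ 2 := fun jk => tmf_integral_sq f _ _
  have hcoef : ∀ (jk : Fin s × Fin v) (p : ℤ × ℤ),
      F ((s : ℤ) * p.1 + (jk.1 : ℤ), (v : ℤ) * p.2 + (jk.2 : ℤ))
        = ‖gaborCoef g a b (h jk) p.1 p.2‖ ^ 2 := by
    intro jk p
    rw [hF]
    simp only
    rw [gaborCoef_shift g f a b s v hs hv _ _ _ _]
  -- the index equivalence
  set e : (Fin s × Fin v) × (ℤ × ℤ) ≃ ℤ × ℤ :=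
    (Equiv.prodProdProdComm (Fin s) (Fin v) ℤ ℤ).trans
      ((zEquiv s hs).prodCongr (zEquiv v hv)) with he
  have heval : ∀ (jk : Fin s × Fin v) (p : ℤ × ℤ),
      e (jk, p) = ((s : ℤ) * p.1 + (jk.1 : ℤ), (v : ℤ) * p.2 + (jk.2 : ℤ)) := by
    intro jk p; rfl
  have hFe : ∀ q : (Fin s × Fin v) × (ℤ × ℤ),
      (F ∘ e) q = ‖gaborCoef g a b (h q.1) q.2.1 q.2.2‖ ^ 2 := by
    rintro ⟨jk, p⟩
    simp only [Function.comp_apply, heval]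
    exact hcoef jk p
  have hsum_each : ∀ jk : Fin s × Fin v,
      Summable (fun p : ℤ × ℤ => ‖gaborCoef g a b (h jk) p.1 p.2‖ ^ 2) ∧
      ∑' p : ℤ × ℤ, ‖gaborCoef g a b (h jk) p.1 p.2‖ ^ 2 ≤ B * ∫ x : ℝ, ‖f x‖ ^ 2 := by
    intro jk
    obtain ⟨h1, h2⟩ := hBd (h jk) (hmem jk)
    exact ⟨h1, by rw [← hint jk]; exact h2⟩
  have hFe_summable : Summable (F ∘ e) := by
    rw [summable_prod_of_nonneg (fun q => by rw [hFe]; positivity)]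
    constructor
    · intro jk
      have := (hsum_each jk).1
      apply this.congr
      intro p
      rw [hFe]
    · exact Summable.of_finite
  have hFsummable : Summable F := (Equiv.summable_iff e).mp hFe_summable
  refine ⟨hFsummable, ?_⟩
  have htsum : ∑' p : ℤ × ℤ, F p = ∑' q : (Fin s × Fin v) × (ℤ × ℤ), (F ∘ e) q :=
    (e.tsum_eq F).symm
  have hnn : 0 ≤ ∫ x : ℝ, ‖f x‖ ^ 2 := integral_nonneg fun x => by positivity
  calc ∑' p : ℤ × ℤ, F p
      = ∑' q : (Fin s × Fin v) × (ℤ × ℤ), (F ∘ e) q := htsum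
    _ = ∑' (jk : Fin s × Fin v) (p : ℤ × ℤ), (F ∘ e) (jk, p) :=
        Summable.tsum_prod' hFe_summable (fun jk => by
          have := (hsum_each jk).1
          apply this.congr
          intro p
          rw [hFe])
    _ = ∑ jk : Fin s × Fin v, ∑' p : ℤ × ℤ, (F ∘ e) (jk, p) := tsum_fintype _
    _ ≤ ∑ jk : Fin s × Fin v, (B * ∫ x : ℝ, ‖f x‖ ^ 2) := by
        apply Finset.sum_le_sum
        intro jk _
        have h2 := (hsum_each jk).2
        have : ∑' p : ℤ × ℤ, (F ∘ e) (jk, p) = ∑' p : ℤ × ℤ, ‖gaborCoef g a b (h jk) p.1 p.2‖ ^ 2 := by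
          apply tsum_congr
          intro p
          rw [hFe]
        rw [this]
        exact h2
    _ = (s : ℝ) * v * B * ∫ x : ℝ, ‖f x‖ ^ 2 := by
        rw [Finset.sum_const, Finset.card_univ, Fintype.card_prod, Fintype.card_fin,
          Fintype.card_fin, nsmul_eq_mul]
        push_cast
        ring

/-- Subsampling: Bessel at `(α, β)` gives Bessel at `(α·r, β·u)` for nonzero integers. -/
lemma gaborBessel_mul (g : ℝ → ℂ) (α β : ℝ) (hBes : GaborBessel g α β)
    (r u : ℤ) (hr : r ≠ 0) (hu : u ≠ 0) : GaborBessel g (α * r) (β * u) := by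
  obtain ⟨B, hB, hBd⟩ := hBes
  refine ⟨B, hB, fun f hf => ?_⟩
  obtain ⟨hS, hT⟩ := hBd f hf
  set i : ℤ × ℤ → ℤ × ℤ := fun p => (r * p.1, u * p.2) with hi
  have hinj : Function.Injective i := by
    rintro ⟨m, n⟩ ⟨m', n'⟩ hpq
    simp only [hi, Prod.mk.injEq] at hpq
    exact Prod.ext (mul_left_cancel₀ hr hpq.1) (mul_left_cancel₀ hu hpq.2)
  have hcomp : (fun p : ℤ × ℤ => ‖gaborCoef g (α * r) (β * u) f p.1 p.2‖ ^ 2) =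
      (fun p : ℤ × ℤ => ‖gaborCoef g α β f p.1 p.2‖ ^ 2) ∘ i := by
    funext p
    simp only [Function.comp_apply, hi]
    rw [gaborCoef_mul]
  have hS' : Summable (fun p : ℤ × ℤ => ‖gaborCoef g (α * r) (β * u) f p.1 p.2‖ ^ 2) := by
    rw [hcomp]; exact hS.comp_injective hinj
  refine ⟨hS', ?_⟩
  have hle : ∑' p : ℤ × ℤ, ‖gaborCoef g (α * r) (β * u) f p.1 p.2‖ ^ 2 ≤
      ∑' p : ℤ × ℤ, ‖gaborCoef g α β f p.1 p.2‖ ^ 2 := by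
    apply hS'.tsum_le_tsum_of_inj i hinj (fun c _ => by positivity)
      (fun p => le_of_eq ?_) hS
    rw [gaborCoef_mul]
  exact le_trans hle hT

/-- If G(g, a, b) is Bessel, then G(g, a·q₁, b·q₂) is Bessel for all positive rationals q₁, q₂. -/
theorem gabor_bessel_rational_rescaling
    (g : ℝ → ℂ) (hg : MemLp g 2 volume) (hgne : ¬ g =ᵐ[volume] 0)
    (a b : ℝ) (ha : 0 < a) (hb : 0 < b)
    (hBes : GaborBessel g a b)
    (q₁ q₂ : ℚ) (hq₁ : 0 < q₁) (hq₂ : 0 < q₂) :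
    GaborBessel g (a * q₁) (b * q₂) := by
  have h1 : GaborBessel g (a / q₁.den) (b / q₂.den) :=
    gaborBessel_div g a b hBes q₁.den q₂.den q₁.pos q₂.pos
  have h2 : GaborBessel g ((a / q₁.den) * q₁.num) ((b / q₂.den) * q₂.num) :=
    gaborBessel_mul g _ _ h1 q₁.num q₂.num (ne_of_gt (Rat.num_pos.mpr hq₁))
      (ne_of_gt (Rat.num_pos.mpr hq₂))
  have e1 : a * (q₁ : ℝ) = (a / q₁.den) * (q₁.num : ℝ) := by
    rw [Rat.cast_def]; ring
  have e2 : b * (q₂ : ℝ) = (b / q₂.den) * (q₂.num : ℝ) := by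
    rw [Rat.cast_def]; ring
  rw [e1, e2]
  exact h2
end

section
/- Let H be a separable Hilbert space, {f_n} a Bessel sequence in H, and suppose there are bounded operators L_1,…,L_r on H and Bessel sequences {f_{k,n}}_n (k = 1,…,r) with Σ_{k=1}^r L_k F_k = I, where F_k is the analysis operator of {f_{k,n}} composed appropriately. Then for all f ∈ H, Σ_{k=1}^r ‖L_k‖ (Σ_n |⟨f, f_{k,n}⟩|²)^{1/2} ≥ ‖f‖, and consequently the concatenated sequence {f_{k,n}}_{1≤k≤r, n} is a frame for H. -/
/-- If bounded operators L₁,…,L_r recombine the analysis operators of r Bessel sequences into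
the identity, then Σ_k ‖L_k‖ (Σ_n |⟨f,f_{k,n}⟩|²)^{1/2} ≥ ‖f‖ and the concatenated sequence
is a frame. -/
theorem concatenated_frame_of_left_inverse_sum
    {H : Type*} [NormedAddCommGroup H] [InnerProductSpace ℂ H] [CompleteSpace H]
    [TopologicalSpace.SeparableSpace H]
    (e : HilbertBasis ℕ ℂ H) (r : ℕ) (f : Fin r → ℕ → H)
    (hBes : ∀ k, IsBessel (f k))
    (F : Fin r → H →L[ℂ] H)
    (hF : ∀ k, ∀ x : H, HasSum (fun n => (inner ℂ (f k n) x : ℂ) • (e n : H)) (F k x))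
    (L : Fin r → H →L[ℂ] H)
    (hL : ∑ k, (L k).comp (F k) = ContinuousLinearMap.id ℂ H) :
    (∀ x : H, ‖x‖ ≤ ∑ k, ‖L k‖ * Real.sqrt (∑' n, ‖(inner ℂ (f k n) x : ℂ)‖ ^ 2)) ∧
    IsFrame (fun p : Fin r × ℕ => f p.1 p.2) := by
  classical
  -- the coefficients of `F k x` in the basis `e` are `⟪f k n, x⟫`
  have hcoef : ∀ (k : Fin r) (x : H) (n : ℕ),
      (inner ℂ (e n : H) (F k x) : ℂ) = inner ℂ (f k n) x := by
    intro k x n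
    have h1 := (hF k x).mapL (innerSL ℂ (e n : H))
    have h2 : HasSum (fun m : ℕ => (innerSL ℂ (e n : H))
        ((inner ℂ (f k m) x : ℂ) • (e m : H))) ((inner ℂ (f k n) x : ℂ)) := by
      convert hasSum_ite_eq n ((inner ℂ (f k n) x : ℂ)) with m
      simp only [innerSL_apply_apply, inner_smul_right,
        orthonormal_iff_ite.mp e.orthonormal n m]
      rcases eq_or_ne m n with h | h
      · subst h; simp
      · simp [h, Ne.symm h]
    simpa using h1.unique h2
  -- Parseval for `F k x`
  have hnorm : ∀ (k : Fin r) (x : H),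
      ‖F k x‖ ^ 2 = ∑' n, ‖(inner ℂ (f k n) x : ℂ)‖ ^ 2 := by
    intro k x
    have hp := e.hasSum_inner_mul_inner (F k x) (F k x)
    have heq : (fun n => (inner ℂ (F k x) (e n : H) : ℂ) * (inner ℂ (e n : H) (F k x) : ℂ))
        = fun n => ((‖(inner ℂ (f k n) x : ℂ)‖ ^ 2 : ℝ) : ℂ) := by
      funext n
      rw [← inner_conj_symm ((F k) x) (e n : H), hcoef k x n, RCLike.conj_mul]
      norm_cast
    rw [heq] at hp
    have hre := hp.mapL (Complex.reCLM : ℂ →L[ℝ] ℝ)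
    simp only [Complex.reCLM_apply, Complex.ofReal_re] at hre
    have h2 : ((inner ℂ (F k x) (F k x) : ℂ)).re = ‖F k x‖ ^ 2 := by
      simpa using inner_self_eq_norm_sq (𝕜 := ℂ) (F k x)
    rw [h2] at hre
    exact hre.tsum_eq.symm
  have hid : ∀ x : H, ∑ k, L k (F k x) = x := by
    intro x
    have := congrArg (fun T : H →L[ℂ] H => T x) hL
    simpa using this
  have hineq : ∀ x : H,
      ‖x‖ ≤ ∑ k, ‖L k‖ * Real.sqrt (∑' n, ‖(inner ℂ (f k n) x : ℂ)‖ ^ 2) := by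
    intro x
    calc ‖x‖ = ‖∑ k, L k (F k x)‖ := by rw [hid x]
      _ ≤ ∑ k, ‖L k (F k x)‖ := norm_sum_le _ _
      _ ≤ ∑ k, ‖L k‖ * ‖F k x‖ := Finset.sum_le_sum fun k _ => (L k).le_opNorm _
      _ = ∑ k, ‖L k‖ * Real.sqrt (∑' n, ‖(inner ℂ (f k n) x : ℂ)‖ ^ 2) := by
          refine Finset.sum_congr rfl fun k _ => ?_
          rw [← hnorm k x, Real.sqrt_sq (norm_nonneg _)]
  refine ⟨hineq, ?_⟩
  choose B hBpos hB using hBes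
  -- summability of the concatenated family
  have hsummable : ∀ x : H,
      Summable (fun p : Fin r × ℕ => ‖(inner ℂ (f p.1 p.2) x : ℂ)‖ ^ 2) := by
    intro x
    refine (summable_prod_of_nonneg fun p => by positivity).2 ⟨fun k => (hB k x).1, ?_⟩
    exact Summable.of_finite
  have htsum : ∀ x : H,
      ∑' p : Fin r × ℕ, ‖(inner ℂ (f p.1 p.2) x : ℂ)‖ ^ 2
        = ∑ k, ∑' n, ‖(inner ℂ (f k n) x : ℂ)‖ ^ 2 := by
    intro x
    rw [Summable.tsum_prod (hsummable x), tsum_fintype]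
  set C : ℝ := ∑ k, ‖L k‖ ^ 2 with hC
  refine ⟨if 0 < C then 1 / C else 1, (∑ k, B k) + 1, ?_, ?_, ?_⟩
  · by_cases h : 0 < C
    · rw [if_pos h]; positivity
    · rw [if_neg h]; norm_num
  · have : 0 ≤ ∑ k, B k := Finset.sum_nonneg fun k _ => (hBpos k).le
    linarith
  · intro x
    refine ⟨hsummable x, ?_, ?_⟩
    · show (if 0 < C then 1 / C else 1) * ‖x‖ ^ 2
          ≤ ∑' p : Fin r × ℕ, ‖(inner ℂ (f p.1 p.2) x : ℂ)‖ ^ 2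
      rw [htsum x]
      have hs_nonneg : ∀ k : Fin r, 0 ≤ ∑' n, ‖(inner ℂ (f k n) x : ℂ)‖ ^ 2 :=
        fun k => tsum_nonneg fun n => by positivity
      by_cases hCpos : 0 < C
      · rw [if_pos hCpos]
        -- Cauchy–Schwarz
        have hcs := Finset.sum_mul_sq_le_sq_mul_sq Finset.univ (fun k => ‖L k‖)
          (fun k => Real.sqrt (∑' n, ‖(inner ℂ (f k n) x : ℂ)‖ ^ 2))
        have hsq : ∀ k : Fin r,
            (Real.sqrt (∑' n, ‖(inner ℂ (f k n) x : ℂ)‖ ^ 2)) ^ 2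
              = ∑' n, ‖(inner ℂ (f k n) x : ℂ)‖ ^ 2 := fun k => Real.sq_sqrt (hs_nonneg k)
        have hx2 : ‖x‖ ^ 2 ≤ C * ∑ k, ∑' n, ‖(inner ℂ (f k n) x : ℂ)‖ ^ 2 := by
          calc ‖x‖ ^ 2
              ≤ (∑ k, ‖L k‖ * Real.sqrt (∑' n, ‖(inner ℂ (f k n) x : ℂ)‖ ^ 2)) ^ 2 := by
                have h := hineq x
                have h0 : (0:ℝ) ≤ ‖x‖ := norm_nonneg _
                nlinarith
            _ ≤ C * ∑ k, ∑' n, ‖(inner ℂ (f k n) x : ℂ)‖ ^ 2 := by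
                refine hcs.trans_eq ?_
                rw [hC]
                congr 1
                exact Finset.sum_congr rfl fun k _ => hsq k
        rw [div_mul_eq_mul_div, one_mul, div_le_iff₀ hCpos, mul_comm _ C]
        exact hx2
      · rw [if_neg hCpos]
        -- all `L k` vanish, so `x = 0`
        have hCz : C = 0 := le_antisymm (not_lt.mp hCpos)
          (Finset.sum_nonneg fun k _ => by positivity)
        have hLk : ∀ k : Fin r, ‖L k‖ = 0 := fun k => by
          have := (Finset.sum_eq_zero_iff_of_nonneg
            (fun k _ => by positivity)).mp hCz k (Finset.mem_univ k)
          exact pow_eq_zero_iff (n := 2) (by norm_num) |>.mp this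
        have hx0 : ‖x‖ = 0 := le_antisymm (by
          have := hineq x
          simpa [hLk] using this) (norm_nonneg _)
        rw [hx0]
        simpa using Finset.sum_nonneg fun k _ => tsum_nonneg
          (fun n : ℕ => by positivity : ∀ n, 0 ≤ ‖(inner ℂ (f k n) x : ℂ)‖ ^ 2)
    · show ∑' p : Fin r × ℕ, ‖(inner ℂ (f p.1 p.2) x : ℂ)‖ ^ 2 ≤ ((∑ k, B k) + 1) * ‖x‖ ^ 2
      rw [htsum x]
      calc ∑ k, ∑' n, ‖(inner ℂ (f k n) x : ℂ)‖ ^ 2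
          ≤ ∑ k, B k * ‖x‖ ^ 2 := Finset.sum_le_sum fun k _ => (hB k x).2
        _ = (∑ k, B k) * ‖x‖ ^ 2 := (Finset.sum_mul _ _ _).symm
        _ ≤ ((∑ k, B k) + 1) * ‖x‖ ^ 2 := by nlinarith [sq_nonneg ‖x‖]
end
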